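/- arXiv:hep-th/9505091 — 3 statements merged into one kernel-verified Lean document; each statement's English description precedes it below -/
import Mathlib

section
/- The rational spin Calogero–Moser Lax matrix satisfies a dynamical linear r-matrix relation: let L be the N×N matrix with entries L_{ij} = δ_{ij} p_i + (1−δ_{ij}) h_{ij}/x_{ij}, and let r = −Σ_{i≠j} (1/x_{ij}) e_{ij}⊗e_{ji} acting on ℂ^N⊗ℂ^N, with r_{21} := P r P where P is the flip (so r_{21} = −r). Then at every point where all x_i are pairwise distinct, the matrix {L ⊗, L} whose ((i,k),(j,l)) entry is the Poisson bracket {L_{ij}, L_{kl}} equals [r, L⊗Id] − [r_{21}, Id⊗L] + Σ_{m=1}^N h_{mm} · ∂r/∂x_m. -/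
/- STATEMENT 2: The rational spin Calogero–Moser Lax matrix satisfies the
   dynamical linear r-matrix relation
   {L ⊗, L} = [r, L⊗Id] − [r₂₁, Id⊗L] + Σ_m h_{mm} ∂r/∂x_m,
   with r = −Σ_{i≠j} (1/x_{ij}) e_{ij}⊗e_{ji} and r₂₁ = P r P. -/

noncomputable section
open Matrix
open scoped Kronecker BigOperators

variable (N l : ℕ)

structure Phase (N l : ℕ) where
  x : Fin N → ℝ
  p : Fin N → ℝ
  a : Fin N → Fin l → ℝ
  b : Fin N → Fin l → ℝ

def Dx (i : Fin N) (F : Phase N l → ℝ) (z : Phase N l) : ℝ :=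
  deriv (fun t : ℝ => F { z with x := Function.update z.x i t }) (z.x i)

def Dp (i : Fin N) (F : Phase N l → ℝ) (z : Phase N l) : ℝ :=
  deriv (fun t : ℝ => F { z with p := Function.update z.p i t }) (z.p i)

def Da (i : Fin N) (α : Fin l) (F : Phase N l → ℝ) (z : Phase N l) : ℝ :=
  deriv (fun t : ℝ =>
    F { z with a := Function.update z.a i (Function.update (z.a i) α t) }) (z.a i α)

def Db (i : Fin N) (α : Fin l) (F : Phase N l → ℝ) (z : Phase N l) : ℝ :=
  deriv (fun t : ℝ =>
    F { z with b := Function.update z.b i (Function.update (z.b i) α t) }) (z.b i α)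

/-- the Poisson bracket, with {p_i,x_j} = δ_{ij} and {a_i^α, b_j^β} = −δ_{ij}δ_{αβ} -/
def pb (F G : Phase N l → ℝ) (z : Phase N l) : ℝ :=
  (∑ i : Fin N, (Dp N l i F z * Dx N l i G z - Dx N l i F z * Dp N l i G z)) -
  ∑ i : Fin N, ∑ α : Fin l,
    (Da N l i α F z * Db N l i α G z - Db N l i α F z * Da N l i α G z)

/-- the spin variables h_{ij} = Σ_α b_i^α a_j^α -/
def hspin (i j : Fin N) (z : Phase N l) : ℝ := ∑ α : Fin l, z.b i α * z.a j α

/-- the rational spin Calogero–Moser Lax matrix entries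
    L_{ij} = δ_{ij} p_i + (1−δ_{ij}) h_{ij}/x_{ij} -/
def LaxE (i j : Fin N) (z : Phase N l) : ℝ :=
  if i = j then z.p i else hspin N l i j z / (z.x i - z.x j)

/-- the Lax matrix -/
def Lax (z : Phase N l) : Matrix (Fin N) (Fin N) ℝ := fun i j => LaxE N l i j z

def E (i j : Fin N) : Matrix (Fin N) (Fin N) ℝ := Matrix.single i j 1

/-- the flip operator P = Σ_{i,j} e_{ij}⊗e_{ji} -/
def flipP : Matrix (Fin N × Fin N) (Fin N × Fin N) ℝ :=
  ∑ i : Fin N, ∑ j : Fin N, E N i j ⊗ₖ E N j i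

/-- the rational r-matrix r = −Σ_{i≠j} (1/x_{ij}) e_{ij}⊗e_{ji}, as a function of x -/
def rRat (x : Fin N → ℝ) : Matrix (Fin N × Fin N) (Fin N × Fin N) ℝ :=
  - ∑ i : Fin N, ∑ j : Fin N,
      if i ≠ j then (1 / (x i - x j)) • (E N i j ⊗ₖ E N j i) else 0

/-- entrywise partial derivative ∂r/∂x_m -/
def pderivMat (m : Fin N) (f : (Fin N → ℝ) → Matrix (Fin N × Fin N) (Fin N × Fin N) ℝ)
    (x : Fin N → ℝ) : Matrix (Fin N × Fin N) (Fin N × Fin N) ℝ :=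
  fun p q => deriv (fun t : ℝ => f (Function.update x m t) p q) (x m)

def mcomm (A B : Matrix (Fin N × Fin N) (Fin N × Fin N) ℝ) :
    Matrix (Fin N × Fin N) (Fin N × Fin N) ℝ := A * B - B * A


lemma Dp_Lax (m i j : Fin N) (z : Phase N l) :
    Dp N l m (LaxE N l i j) z = if i = j ∧ j = m then 1 else 0 := by
  unfold Dp LaxE
  by_cases hij : i = j
  · subst hij
    by_cases him : i = m
    · subst him; simp [Function.update_self]
    · simp [him, Function.update_of_ne him]
  · simp [hij, hspin]

lemma Da_Lax (m : Fin N) (α : Fin l) (i j : Fin N) (z : Phase N l) :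
    Da N l m α (LaxE N l i j) z =
      if i = j then 0 else if j = m then z.b i α / (z.x i - z.x j) else 0 := by
  unfold Da LaxE
  by_cases hij : i = j
  · simp [hij]
  · simp only [hij, if_false]
    by_cases hjm : j = m
    · subst hjm
      simp only [hspin, Function.update_self]
      have h1 : ∀ t : ℝ, (∑ β : Fin l, z.b i β * Function.update (z.a j) α t β)
          = z.b i α * t + ∑ β ∈ Finset.univ.erase α, z.b i β * z.a j β := by
        intro t
        rw [← Finset.add_sum_erase _ _ (Finset.mem_univ α)]
        congr 1
        · simp [Function.update_self]
        · exact Finset.sum_congr rfl fun β hβ => by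
            rw [Function.update_of_ne (Finset.ne_of_mem_erase hβ)]
      simp only [h1]
      have : HasDerivAt (fun t : ℝ =>
          (z.b i α * t + ∑ β ∈ Finset.univ.erase α, z.b i β * z.a j β) / (z.x i - z.x j))
          (z.b i α / (z.x i - z.x j)) (z.a j α) := by
        have := (((hasDerivAt_id (z.a j α)).const_mul (z.b i α)).add_const
          (∑ β ∈ Finset.univ.erase α, z.b i β * z.a j β)).div_const (z.x i - z.x j)
        simpa using this
      exact this.deriv
    · simp [hjm, hspin, Function.update_of_ne (Ne.symm hjm)]

lemma Db_Lax (m : Fin N) (α : Fin l) (i j : Fin N) (z : Phase N l) :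
    Db N l m α (LaxE N l i j) z =
      if i = j then 0 else if i = m then z.a j α / (z.x i - z.x j) else 0 := by
  unfold Db LaxE
  by_cases hij : i = j
  · simp [hij]
  · simp only [hij, if_false]
    by_cases him : i = m
    · subst him
      simp only [hspin, Function.update_self]
      have h1 : ∀ t : ℝ, (∑ β : Fin l, Function.update (z.b i) α t β * z.a j β)
          = z.a j α * t + ∑ β ∈ Finset.univ.erase α, z.b i β * z.a j β := by
        intro t
        rw [← Finset.add_sum_erase _ _ (Finset.mem_univ α)]
        congr 1
        · simp [Function.update_self, mul_comm]
        · exact Finset.sum_congr rfl fun β hβ => by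
            rw [Function.update_of_ne (Finset.ne_of_mem_erase hβ)]
      simp only [h1]
      have : HasDerivAt (fun t : ℝ =>
          (z.a j α * t + ∑ β ∈ Finset.univ.erase α, z.b i β * z.a j β) / (z.x i - z.x j))
          (z.a j α / (z.x i - z.x j)) (z.b i α) := by
        have := (((hasDerivAt_id (z.b i α)).const_mul (z.a j α)).add_const
          (∑ β ∈ Finset.univ.erase α, z.b i β * z.a j β)).div_const (z.x i - z.x j)
        simpa using this
      exact this.deriv
    · simp [him, hspin, Function.update_of_ne (Ne.symm him)]

lemma Dx_Lax (m i j : Fin N) (z : Phase N l) (hne : i ≠ j → z.x i ≠ z.x j) :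
    Dx N l m (LaxE N l i j) z =
      if i = j then 0 else
        -(hspin N l i j z) * ((if i = m then (1:ℝ) else 0) - if j = m then 1 else 0)
          / (z.x i - z.x j)^2 := by
  unfold Dx LaxE
  by_cases hij : i = j
  · simp [hij]
  · simp only [hij, if_false]
    have hsub : z.x i - z.x j ≠ 0 := sub_ne_zero.mpr (hne hij)
    by_cases him : i = m
    · subst him
      have hjm : ¬ j = i := fun h => hij h.symm
      simp only [hspin, Function.update_self, Function.update_of_ne hjm]
      have : HasDerivAt (fun t : ℝ => hspin N l i j z / (t - z.x j))
          (-(hspin N l i j z) * (1 - 0) / (z.x i - z.x j)^2) (z.x i) := by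
        have hd : HasDerivAt (fun t : ℝ => t - z.x j) 1 (z.x i) :=
          (hasDerivAt_id _).sub_const _
        have := (hasDerivAt_const (z.x i) (hspin N l i j z)).div hd (sub_ne_zero.mpr (hne hij))
        exact this.congr_deriv (by ring)
      have h2 := this.deriv
      simp only [hspin] at h2 ⊢
      rw [h2]
      simp only [if_true, if_neg hjm]
    · by_cases hjm : j = m
      · subst hjm
        have hij' : ¬ i = j := hij
        simp only [hspin, Function.update_self, Function.update_of_ne him]
        have : HasDerivAt (fun t : ℝ => hspin N l i j z / (z.x i - t))
            (hspin N l i j z / (z.x i - z.x j)^2) (z.x j) := by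
          have hd : HasDerivAt (fun t : ℝ => z.x i - t) (-1) (z.x j) := by
            exact (hasDerivAt_id' _).const_sub _
          have := (hasDerivAt_const (z.x j) (hspin N l i j z)).div hd (sub_ne_zero.mpr (hne hij))
          exact this.congr_deriv (by ring)
        have h2 := this.deriv
        simp only [hspin] at h2 ⊢
        rw [h2]
        simp only [if_true, if_neg him]
        ring
      · simp only [Function.update_of_ne him, Function.update_of_ne hjm, hspin]
        simp [him, hjm]

lemma E_apply (i j a b : Fin N) : E N i j a b = if i = a ∧ j = b then 1 else 0 := by
  simp [E, Matrix.single]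

lemma flipP_apply (p q : Fin N × Fin N) :
    flipP N p q = if p.1 = q.2 ∧ p.2 = q.1 then 1 else 0 := by
  unfold flipP
  simp only [Matrix.sum_apply, Matrix.kroneckerMap_apply, E_apply]
  rcases p with ⟨p1, p2⟩; rcases q with ⟨q1, q2⟩
  simp only [ite_and, mul_ite, mul_one, mul_zero, ite_mul, one_mul, zero_mul]
  rw [Finset.sum_eq_single p1, Finset.sum_eq_single p2]
  · simp only []
    by_cases h1 : p1 = q2 <;> by_cases h2 : p2 = q1 <;> simp [h1, h2]
  · intro b _ hb
    by_cases h1 : p1 = q2 <;> simp [h1, Ne.symm hb, hb]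
  · simp
  · intro c _ hc
    apply Finset.sum_eq_zero
    intro d _
    simp [Ne.symm hc, hc]
  · simp

lemma rRat_apply (x : Fin N → ℝ) (p q : Fin N × Fin N) :
    rRat N x p q = if p.1 ≠ q.1 ∧ p.2 = q.1 ∧ q.2 = p.1 then -(1/(x p.1 - x q.1)) else 0 := by
  unfold rRat
  rcases p with ⟨p1, p2⟩; rcases q with ⟨q1, q2⟩
  simp only [Matrix.neg_apply, Matrix.sum_apply]
  rw [Finset.sum_eq_single p1]
  · rw [Finset.sum_eq_single q1]
    · by_cases h0 : p1 = q1
      · simp [h0]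
      · simp only [ne_eq, h0, not_false_iff, if_true, Matrix.smul_apply,
          Matrix.kroneckerMap_apply, E_apply, smul_eq_mul]
        rw [if_pos ⟨trivial, trivial⟩]
        by_cases hc : p2 = q1 ∧ q2 = p1
        · rw [if_pos ⟨hc.1.symm, hc.2.symm⟩, if_pos ⟨trivial, hc⟩]; ring
        · rw [if_neg (fun h => hc ⟨h.1.symm, h.2.symm⟩), if_neg (fun h => hc h.2)]; simp
    · intro b _ hb
      by_cases hpb : p1 = b
      · simp [hpb]
      · simp only [ne_eq, hpb, not_false_iff, if_true, Matrix.smul_apply,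
          Matrix.kroneckerMap_apply, E_apply, smul_eq_mul]
        rw [if_neg (fun h => hb h.2)]
        simp
    · simp
  · intro c _ hc
    apply Finset.sum_eq_zero
    intro d _
    by_cases h : c = d
    · simp [h]
    · simp only [ne_eq, h, not_false_iff, if_true, Matrix.smul_apply,
        Matrix.kroneckerMap_apply, E_apply, smul_eq_mul]
      rw [if_neg (fun hh => hc hh.1)]
      simp
  · simp

lemma mulP_left (A : Matrix (Fin N × Fin N) (Fin N × Fin N) ℝ) (p q : Fin N × Fin N) :
    (flipP N * A) p q = A (p.2, p.1) q := by
  rw [Matrix.mul_apply]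
  rw [Fintype.sum_prod_type]
  simp only [flipP_apply, ite_and, ite_mul, one_mul, zero_mul]
  simp [Finset.sum_ite_eq, Finset.sum_ite_eq']

lemma mulP_right (A : Matrix (Fin N × Fin N) (Fin N × Fin N) ℝ) (p q : Fin N × Fin N) :
    (A * flipP N) p q = A p (q.2, q.1) := by
  rw [Matrix.mul_apply]
  rw [Fintype.sum_prod_type]
  simp only [flipP_apply, ite_and, mul_ite, mul_one, mul_zero]
  simp [Finset.sum_ite_eq, Finset.sum_ite_eq']

lemma r21_apply (x : Fin N → ℝ) (p q : Fin N × Fin N) :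
    (flipP N * rRat N x * flipP N) p q =
      if p.2 ≠ q.2 ∧ p.1 = q.2 ∧ q.1 = p.2 then -(1/(x p.2 - x q.2)) else 0 := by
  rw [mulP_right, mulP_left, rRat_apply]

lemma rL_apply (x : Fin N → ℝ) (A : Matrix (Fin N) (Fin N) ℝ) (p q : Fin N × Fin N) :
    (rRat N x * (A ⊗ₖ (1 : Matrix (Fin N) (Fin N) ℝ))) p q =
      if p.1 ≠ p.2 ∧ p.1 = q.2 then -(1/(x p.1 - x p.2)) * A p.2 q.1 else 0 := by
  rw [Matrix.mul_apply, Fintype.sum_prod_type]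
  simp only [rRat_apply, Matrix.kroneckerMap_apply, Matrix.one_apply, ite_and, ite_mul, zero_mul,
    mul_ite, mul_zero, mul_one, neg_mul]
  rw [Finset.sum_eq_single p.2]
  · rw [Finset.sum_eq_single p.1]
    · by_cases h0 : p.1 = p.2
      · simp [h0]
      · by_cases h1 : p.1 = q.2 <;> simp [h0, h1]
    · intro b _ hb
      simp [Ne.symm hb, hb]
    · simp
  · intro a _ ha
    by_cases h : p.1 = a <;> simp [h, Ne.symm ha, ha]
  · simp

lemma Lr_apply (x : Fin N → ℝ) (A : Matrix (Fin N) (Fin N) ℝ) (p q : Fin N × Fin N) :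
    ((A ⊗ₖ (1 : Matrix (Fin N) (Fin N) ℝ)) * rRat N x) p q =
      if q.2 ≠ q.1 ∧ p.2 = q.1 then A p.1 q.2 * (-(1/(x q.2 - x q.1))) else 0 := by
  rw [Matrix.mul_apply, Fintype.sum_prod_type]
  simp only [rRat_apply, Matrix.kroneckerMap_apply, Matrix.one_apply, ite_and, ite_mul, zero_mul,
    mul_ite, mul_zero, mul_one, neg_mul]
  rw [Finset.sum_eq_single q.2]
  · rw [Finset.sum_eq_single p.2]
    · by_cases h0 : q.2 = q.1
      · simp [h0]
      · by_cases h1 : p.2 = q.1 <;> simp [h0, h1]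
    · intro b _ hb
      simp [Ne.symm hb, hb]
    · simp
  · intro a _ ha
    by_cases h : a = q.1
    · subst h; simp [Ne.symm ha, ha]
    · simp [h, Ne.symm ha, ha]
  · simp

lemma r21L_apply (x : Fin N → ℝ) (A : Matrix (Fin N) (Fin N) ℝ) (p q : Fin N × Fin N) :
    ((flipP N * rRat N x * flipP N) * ((1 : Matrix (Fin N) (Fin N) ℝ) ⊗ₖ A)) p q =
      if p.2 ≠ p.1 ∧ p.2 = q.1 then -(1/(x p.2 - x p.1)) * A p.1 q.2 else 0 := by
  rw [Matrix.mul_apply, Fintype.sum_prod_type]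
  simp only [r21_apply, Matrix.kroneckerMap_apply, Matrix.one_apply, ite_and, ite_mul, zero_mul,
    mul_ite, mul_zero, mul_one, neg_mul, one_mul]
  rw [Finset.sum_eq_single p.2]
  · rw [Finset.sum_eq_single p.1]
    · by_cases h0 : p.2 = p.1
      · simp [h0]
      · by_cases h1 : p.2 = q.1 <;> simp [h0, h1]
    · intro b _ hb
      simp [Ne.symm hb, hb]
    · simp
  · intro a _ ha
    by_cases h : a = q.1
    · subst h; simp [Ne.symm ha, ha]
    · simp [h, Ne.symm ha, ha]
  · simp

lemma Lr21_apply (x : Fin N → ℝ) (A : Matrix (Fin N) (Fin N) ℝ) (p q : Fin N × Fin N) :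
    (((1 : Matrix (Fin N) (Fin N) ℝ) ⊗ₖ A) * (flipP N * rRat N x * flipP N)) p q =
      if q.1 ≠ q.2 ∧ p.1 = q.2 then A p.2 q.1 * (-(1/(x q.1 - x q.2))) else 0 := by
  rw [Matrix.mul_apply, Fintype.sum_prod_type]
  simp only [r21_apply, Matrix.kroneckerMap_apply, Matrix.one_apply, ite_and, ite_mul, zero_mul,
    mul_ite, mul_zero, mul_one, neg_mul, one_mul]
  rw [Finset.sum_eq_single p.1]
  · rw [Finset.sum_eq_single q.1]
    · by_cases h0 : q.1 = q.2
      · simp [h0]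
      · by_cases h1 : p.1 = q.2 <;> simp [h0, h1]
    · intro b _ hb
      simp [Ne.symm hb, hb]
    · simp
  · intro a _ ha
    simp [Ne.symm ha, ha]
  · simp

lemma pderiv_rRat (m : Fin N) (x : Fin N → ℝ) (hne : ∀ i j : Fin N, i ≠ j → x i ≠ x j)
    (p q : Fin N × Fin N) :
    pderivMat N m (rRat N) x p q =
      if p.1 ≠ q.1 ∧ p.2 = q.1 ∧ q.2 = p.1 then
        ((if p.1 = m then (1:ℝ) else 0) - if q.1 = m then 1 else 0) / (x p.1 - x q.1)^2
      else 0 := by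
  unfold pderivMat
  by_cases hc : p.1 ≠ q.1 ∧ p.2 = q.1 ∧ q.2 = p.1
  · have hfe : (fun t : ℝ => rRat N (Function.update x m t) p q)
        = fun t : ℝ => -(1/(Function.update x m t p.1 - Function.update x m t q.1)) := by
      funext t; rw [rRat_apply, if_pos hc]
    rw [hfe, if_pos hc]
    have hxx : x p.1 - x q.1 ≠ 0 := sub_ne_zero.mpr (hne _ _ hc.1)
    by_cases h1 : p.1 = m
    · subst h1
      have h2 : ¬ q.1 = p.1 := fun h => hc.1 h.symm
      simp only [Function.update_self, Function.update_of_ne h2]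
      have hder : HasDerivAt (fun t : ℝ => -(1/(t - x q.1)))
          ((1 - 0) / (x p.1 - x q.1)^2) (x p.1) := by
        have hd : HasDerivAt (fun t : ℝ => t - x q.1) 1 (x p.1) :=
          (hasDerivAt_id _).sub_const _
        have := ((hasDerivAt_const (x p.1) (1:ℝ)).div hd hxx).neg
        exact this.congr_deriv (by ring)
      rw [hder.deriv]
      rw [if_pos trivial, if_neg h2]
    · by_cases h2 : q.1 = m
      · subst h2
        simp only [Function.update_self, Function.update_of_ne h1]
        have hder : HasDerivAt (fun t : ℝ => -(1/(x p.1 - t)))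
            ((0 - 1) / (x p.1 - x q.1)^2) (x q.1) := by
          have hd : HasDerivAt (fun t : ℝ => x p.1 - t) (-1) (x q.1) := by
            exact (hasDerivAt_id' _).const_sub _
          have := ((hasDerivAt_const (x q.1) (1:ℝ)).div hd hxx).neg
          exact this.congr_deriv (by ring)
        rw [hder.deriv]
        rw [if_neg h1, if_pos trivial]
      · simp only [Function.update_of_ne h1, Function.update_of_ne h2]
        simp [h1, h2]
  · simp only [hc, if_false]
    have hfe : (fun t : ℝ => rRat N (Function.update x m t) p q) = fun _ : ℝ => (0:ℝ) := by
      funext t; rw [rRat_apply, if_neg hc]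
    rw [hfe]
    simp

lemma sum_pderiv_apply (z : Phase N l) (hne : ∀ i j : Fin N, i ≠ j → z.x i ≠ z.x j)
    (p q : Fin N × Fin N) :
    (∑ m : Fin N, hspin N l m m z • pderivMat N m (rRat N) z.x) p q =
      if p.1 ≠ q.1 ∧ p.2 = q.1 ∧ q.2 = p.1 then
        (hspin N l p.1 p.1 z - hspin N l q.1 q.1 z) / (z.x p.1 - z.x q.1)^2
      else 0 := by
  rw [Matrix.sum_apply]
  simp only [Matrix.smul_apply, pderiv_rRat N _ _ hne, smul_eq_mul]
  by_cases hc : p.1 ≠ q.1 ∧ p.2 = q.1 ∧ q.2 = p.1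
  · have step : ∀ m : Fin N, hspin N l m m z *
        (if p.1 ≠ q.1 ∧ p.2 = q.1 ∧ q.2 = p.1 then
          (((if p.1 = m then (1:ℝ) else 0) - if q.1 = m then 1 else 0) / (z.x p.1 - z.x q.1)^2)
        else 0) =
        ((if p.1 = m then hspin N l m m z else 0) - if q.1 = m then hspin N l m m z else 0)
          / (z.x p.1 - z.x q.1)^2 := by
      intro m
      rw [if_pos hc]
      by_cases h1 : p.1 = m <;> by_cases h2 : q.1 = m <;> simp [h1, h2] <;> ring
    rw [Finset.sum_congr rfl (fun m _ => step m), ← Finset.sum_div, Finset.sum_sub_distrib,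
      if_pos hc]
    have e1 : (∑ m : Fin N, if p.1 = m then hspin N l m m z else 0) = hspin N l p.1 p.1 z := by
      simp [Finset.sum_ite_eq]
    have e2 : (∑ m : Fin N, if q.1 = m then hspin N l m m z else 0) = hspin N l q.1 q.1 z := by
      simp [Finset.sum_ite_eq]
    rw [e1, e2]
  · simp [hc]

lemma pb_Lax (z : Phase N l) (hne : ∀ i j : Fin N, i ≠ j → z.x i ≠ z.x j) (i j k w : Fin N) :
    pb N l (LaxE N l i j) (LaxE N l k w) z =
      (if i = j then (if k = w then 0 else
          -(hspin N l k w z) * ((if k = j then (1:ℝ) else 0) - (if w = j then 1 else 0))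
            / (z.x k - z.x w)^2) else 0)
      - (if k = w then (if i = j then 0 else
          -(hspin N l i j z) * ((if i = w then (1:ℝ) else 0) - (if j = w then 1 else 0))
            / (z.x i - z.x j)^2) else 0)
      - (if i = j ∨ k = w then 0 else
          (if j = k then hspin N l i w z / ((z.x i - z.x j) * (z.x k - z.x w)) else 0)
        - (if w = i then hspin N l k j z / ((z.x i - z.x j) * (z.x k - z.x w)) else 0)) := by
  unfold pb
  have DP1 : ∀ m, Dp N l m (LaxE N l i j) z = if i = j ∧ j = m then 1 else 0 :=
    fun m => Dp_Lax N l m i j z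
  have DP2 : ∀ m, Dp N l m (LaxE N l k w) z = if k = w ∧ w = m then 1 else 0 :=
    fun m => Dp_Lax N l m k w z
  have DX1 : ∀ m, Dx N l m (LaxE N l i j) z = if i = j then 0 else
      -(hspin N l i j z) * ((if i = m then (1:ℝ) else 0) - if j = m then 1 else 0)
        / (z.x i - z.x j)^2 := fun m => Dx_Lax N l m i j z (hne i j)
  have DX2 : ∀ m, Dx N l m (LaxE N l k w) z = if k = w then 0 else
      -(hspin N l k w z) * ((if k = m then (1:ℝ) else 0) - if w = m then 1 else 0)
        / (z.x k - z.x w)^2 := fun m => Dx_Lax N l m k w z (hne k w)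
  have DA1 : ∀ m α, Da N l m α (LaxE N l i j) z =
      if i = j then 0 else if j = m then z.b i α / (z.x i - z.x j) else 0 :=
    fun m α => Da_Lax N l m α i j z
  have DA2 : ∀ m α, Da N l m α (LaxE N l k w) z =
      if k = w then 0 else if w = m then z.b k α / (z.x k - z.x w) else 0 :=
    fun m α => Da_Lax N l m α k w z
  have DB1 : ∀ m α, Db N l m α (LaxE N l i j) z =
      if i = j then 0 else if i = m then z.a j α / (z.x i - z.x j) else 0 :=
    fun m α => Db_Lax N l m α i j z
  have DB2 : ∀ m α, Db N l m α (LaxE N l k w) z =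
      if k = w then 0 else if k = m then z.a w α / (z.x k - z.x w) else 0 :=
    fun m α => Db_Lax N l m α k w z
  simp only [DP1, DP2, DX1, DX2, DA1, DA2, DB1, DB2]
  by_cases hij : i = j <;> by_cases hkw : k = w
  · simp [hij, hkw]
  · subst hij
    simp [hkw, ite_mul, mul_ite, mul_zero, zero_mul, ite_and, Finset.sum_ite_eq, Finset.sum_ite_eq']
  · subst hkw
    simp [hij, ite_mul, mul_ite, mul_zero, zero_mul, ite_and, Finset.sum_ite_eq, Finset.sum_ite_eq']
  · have key1 : ∑ x : Fin N, ∑ α : Fin l,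
        (if k = x then if j = x then z.b i α / (z.x i - z.x j) * (z.a w α / (z.x k - z.x w)) else 0 else 0) =
        if j = k then hspin N l i w z / ((z.x i - z.x j) * (z.x k - z.x w)) else 0 := by
      rw [Finset.sum_eq_single k]
      · by_cases hk : j = k
        · subst hk
          simp only [eq_self_iff_true, if_true]
          rw [Finset.sum_congr rfl (fun α _ => div_mul_div_comm _ _ _ _), ← Finset.sum_div]
          rfl
        · rw [if_neg hk]
          simp [hk]
      · intro b _ hb
        simp [Ne.symm hb, hb]
      · simp
    have key2 : ∑ x : Fin N, ∑ α : Fin l,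
        (if w = x then if i = x then z.a j α / (z.x i - z.x j) * (z.b k α / (z.x k - z.x w)) else 0 else 0) =
        if w = i then hspin N l k j z / ((z.x i - z.x j) * (z.x k - z.x w)) else 0 := by
      rw [Finset.sum_eq_single w]
      · by_cases hwi : i = w
        · subst hwi
          simp only [eq_self_iff_true, if_true]
          rw [Finset.sum_congr rfl (fun α _ => div_mul_div_comm _ _ _ _), ← Finset.sum_div]
          unfold hspin
          rw [Finset.sum_congr rfl
            (fun α _ => by ring : ∀ α ∈ Finset.univ, z.a j α * z.b k α = z.b k α * z.a j α)]
        · rw [if_neg (fun h : w = i => hwi h.symm)]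
          simp [hwi]
      · intro b _ hb
        simp [Ne.symm hb, hb]
      · simp
    simp only [hij, hkw, if_false, false_and, ite_mul, mul_ite, zero_mul, mul_zero, or_self,
      sub_zero, zero_sub]
    rw [Finset.sum_congr rfl
      (fun x _ => Finset.sum_sub_distrib (s := (Finset.univ : Finset (Fin l))) _ _)]
    rw [Finset.sum_sub_distrib]
    rw [key1, key2]
    simp

set_option maxHeartbeats 4000000 in
theorem rational_spinCM_rmatrix (hN : 2 ≤ N) (hl : 1 ≤ l)
    (z : Phase N l) (hx : Function.Injective z.x) :
    (Matrix.of fun (p : Fin N × Fin N) (q : Fin N × Fin N) =>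
        pb N l (LaxE N l p.1 q.1) (LaxE N l p.2 q.2) z) =
      mcomm N (rRat N z.x) (Lax N l z ⊗ₖ (1 : Matrix (Fin N) (Fin N) ℝ)) -
      mcomm N (flipP N * rRat N z.x * flipP N) ((1 : Matrix (Fin N) (Fin N) ℝ) ⊗ₖ Lax N l z) +
      ∑ m : Fin N, hspin N l m m z • pderivMat N m (rRat N) z.x := by
  have hne : ∀ a b : Fin N, a ≠ b → z.x a ≠ z.x b := fun a b hab h => hab (hx h)
  have hs : ∀ a b : Fin N, a ≠ b → z.x a - z.x b ≠ 0 := fun a b hab => sub_ne_zero.mpr (hne a b hab)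
  ext ⟨i, k⟩ ⟨j, w⟩
  simp only [Matrix.of_apply, Matrix.add_apply, Matrix.sub_apply, mcomm,
    rL_apply, Lr_apply, r21L_apply, Lr21_apply, sum_pderiv_apply N l z hne,
    pb_Lax N l z hne i j k w, Lax, LaxE]
  by_cases hij : i = j <;> by_cases hkw : k = w <;> by_cases hik : i = k <;>
    by_cases hjw : j = w <;> by_cases hiw : i = w <;> by_cases hjk : j = k <;>
    (try subst hij) <;> (try subst hkw) <;> (try subst hik) <;> (try subst hjw) <;>
    (try subst hiw) <;> (try subst hjk) <;>
    (try simp_all [eq_comm])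
  · have h1 : z.x i - z.x w ≠ 0 := sub_ne_zero.mpr (hne _ _ hkw)
    have h2 : z.x w - z.x i ≠ 0 := sub_ne_zero.mpr (hne _ _ (Ne.symm hkw))
    field_simp
    ring
  · have h1 : z.x i - z.x k ≠ 0 := sub_ne_zero.mpr (hne _ _ hjk)
    have h2 : z.x k - z.x i ≠ 0 := sub_ne_zero.mpr (hne _ _ (Ne.symm hjk))
    field_simp
    ring
  · have h1 : z.x i - z.x j ≠ 0 := sub_ne_zero.mpr (hne _ _ hij)
    have h2 : z.x j - z.x i ≠ 0 := sub_ne_zero.mpr (hne _ _ (Ne.symm hij))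
    field_simp
    ring
  · have h1 : z.x i - z.x j ≠ 0 := sub_ne_zero.mpr (hne _ _ hiw)
    have h2 : z.x j - z.x i ≠ 0 := sub_ne_zero.mpr (hne _ _ (Ne.symm hiw))
    field_simp
    ring
  · have h1 : z.x i - z.x j ≠ 0 := sub_ne_zero.mpr (hne _ _ hik)
    have h2 : z.x j - z.x i ≠ 0 := sub_ne_zero.mpr (hne _ _ (Ne.symm hik))
    field_simp
    ring
  · have h1 : z.x i - z.x j ≠ 0 := sub_ne_zero.mpr (hne _ _ hij)
    have h2 : z.x j - z.x i ≠ 0 := sub_ne_zero.mpr (hne _ _ (Ne.symm hij))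
    have h3 : z.x i - z.x k ≠ 0 := sub_ne_zero.mpr (hne _ _ hik)
    have h4 : z.x k - z.x i ≠ 0 := sub_ne_zero.mpr (hne _ _ (Ne.symm hik))
    have h5 : z.x k - z.x j ≠ 0 := sub_ne_zero.mpr (hne _ _ hjk)
    have h6 : z.x j - z.x k ≠ 0 := sub_ne_zero.mpr (hne _ _ (Ne.symm hjk))
    field_simp
    ring
  · have h1 : z.x i - z.x w ≠ 0 := sub_ne_zero.mpr (hne _ _ hiw)
    have h2 : z.x w - z.x i ≠ 0 := sub_ne_zero.mpr (hne _ _ (Ne.symm hiw))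
    have h3 : z.x j - z.x w ≠ 0 := sub_ne_zero.mpr (hne _ _ hkw)
    have h4 : z.x w - z.x j ≠ 0 := sub_ne_zero.mpr (hne _ _ (Ne.symm hkw))
    have h5 : z.x i - z.x j ≠ 0 := sub_ne_zero.mpr (hne _ _ hik)
    have h6 : z.x j - z.x i ≠ 0 := sub_ne_zero.mpr (hne _ _ (Ne.symm hik))
    field_simp
    ring
end
end

section
/- Part (1) of the main theorem: under hypotheses (i)–(vi) of the stated setting, for every n ≥ 1 the operator I_n := Tr_{1…n}[ L_1 ⋯ L_n · R̂_{12}(x−2γh^{(3,n)}) R̂_{23}(x−2γh^{(4,n)}) ⋯ R̂_{k,k+1}(x−2γh^{(k+2,n)}) ⋯ R̂_{n−1,n}(x) ] maps the zero-weight subspace V_0 into itself: I_n(V_0) ⊆ V_0. -/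
/- STATEMENT 12: Part (1) of the main theorem: under hypotheses (i)–(vi),
   for every n ≥ 1 the operator
   I_n = Tr_{1…n}[ L_1 ⋯ L_n R̂_{12}(x−2γh^{(3,n)}) ⋯ R̂_{n−1,n}(x) ]
   maps the zero-weight subspace V₀ into itself. -/

noncomputable section
open Matrix Complex
open scoped BigOperators

variable (N : ℕ) (γ : ℂ)
variable {W : Type} [AddCommGroup W] [Module ℂ W]

/- ---- placement of a matrix in two of three factors, with dynamical shift ---- -/

def sh12 (S : (Fin N → ℂ) → Matrix (Fin N × Fin N) (Fin N × Fin N) ℂ)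
    (x : Fin N → ℂ) (s : ℂ) :
    Matrix (Fin N × Fin N × Fin N) (Fin N × Fin N × Fin N) ℂ :=
  fun p q => if p.2.2 = q.2.2 then
    S (x + s • (Pi.single q.2.2 1 : Fin N → ℂ)) (p.1, p.2.1) (q.1, q.2.1) else 0

def sh13 (S : (Fin N → ℂ) → Matrix (Fin N × Fin N) (Fin N × Fin N) ℂ)
    (x : Fin N → ℂ) (s : ℂ) :
    Matrix (Fin N × Fin N × Fin N) (Fin N × Fin N × Fin N) ℂ :=
  fun p q => if p.2.1 = q.2.1 then
    S (x + s • (Pi.single q.2.1 1 : Fin N → ℂ)) (p.1, p.2.2) (q.1, q.2.2) else 0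

def sh23 (S : (Fin N → ℂ) → Matrix (Fin N × Fin N) (Fin N × Fin N) ℂ)
    (x : Fin N → ℂ) (s : ℂ) :
    Matrix (Fin N × Fin N × Fin N) (Fin N × Fin N × Fin N) ℂ :=
  fun p q => if p.1 = q.1 then
    S (x + s • (Pi.single q.1 1 : Fin N → ℂ)) (p.2.1, p.2.2) (q.2.1, q.2.2) else 0

/-- (iii) the dynamical Yang–Baxter equation -/
def DYBE (R : (Fin N → ℂ) → Matrix (Fin N × Fin N) (Fin N × Fin N) ℂ) : Prop :=
  ∀ x : Fin N → ℂ,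
    sh12 N R x γ * sh13 N R x (-γ) * sh23 N R x γ =
    sh23 N R x (-γ) * sh13 N R x γ * sh12 N R x (-γ)

/-- (i) zero-weight condition -/
def ZeroWeight (R : (Fin N → ℂ) → Matrix (Fin N × Fin N) (Fin N × Fin N) ℂ) : Prop :=
  ∀ x : Fin N → ℂ, ∀ i j k l : Fin N,
    (Pi.single i 1 : Fin N → ℂ) + Pi.single j 1 ≠
      (Pi.single k 1 : Fin N → ℂ) + Pi.single l 1 →
    R x (i, j) (k, l) = 0

/-- (ii) translation condition -/
def TransInv (R : (Fin N → ℂ) → Matrix (Fin N × Fin N) (Fin N × Fin N) ℂ) : Prop :=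
  ∀ x : Fin N → ℂ, ∀ t : ℂ, ∀ i j k l : Fin N,
    R (x + t • ((Pi.single i 1 : Fin N → ℂ) + Pi.single j 1)) (i, j) (k, l) =
      R x (i, j) (k, l)

/- ---- the quantum space V = (ℂ^N → W) and its structure ---- -/

/-- the quantum space: W-valued functions on ℂ^N -/
abbrev Vsp (N : ℕ) (W : Type) [AddCommGroup W] [Module ℂ W] := (Fin N → ℂ) → W

/-- membership in the zero-weight subspace V₀ (functions valued in W₀) -/
def inV0 (π : (Fin N → ℂ) → Module.End ℂ W) (u : Vsp N W) : Prop :=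
  ∀ x, π 0 (u x) = u x

/-- the dynamical scalar operator f(x + s·h^{(q)}) on V -/
def Phi (M : Finset (Fin N → ℂ)) (π : (Fin N → ℂ) → Module.End ℂ W)
    (s : ℂ) (f : (Fin N → ℂ) → ℂ) (u : Vsp N W) : Vsp N W :=
  fun x => ∑ μ ∈ M, f (x + s • μ) • π μ (u x)

/-- L₁ = Σ e_{ab}⊗Id⊗L_{ab} on functions ℂ^N → ℂ^N⊗ℂ^N⊗W -/
def Lax1 (L : Fin N → Fin N → (Vsp N W →ₗ[ℂ] Vsp N W))
    (u : (Fin N → ℂ) → Fin N × Fin N → W) : (Fin N → ℂ) → Fin N × Fin N → W :=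
  fun x p => ∑ b : Fin N, L p.1 b (fun y => u y (b, p.2)) x

/-- L₂ = Σ Id⊗e_{ab}⊗L_{ab} -/
def Lax2 (L : Fin N → Fin N → (Vsp N W →ₗ[ℂ] Vsp N W))
    (u : (Fin N → ℂ) → Fin N × Fin N → W) : (Fin N → ℂ) → Fin N × Fin N → W :=
  fun x p => ∑ b : Fin N, L p.2 b (fun y => u y (p.1, b)) x

/-- R₁₂(x + s·h^{(q)}) acting on functions ℂ^N → ℂ^N⊗ℂ^N⊗W -/
def Rop (R : (Fin N → ℂ) → Matrix (Fin N × Fin N) (Fin N × Fin N) ℂ)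
    (M : Finset (Fin N → ℂ)) (π : (Fin N → ℂ) → Module.End ℂ W) (s : ℂ)
    (u : (Fin N → ℂ) → Fin N × Fin N → W) : (Fin N → ℂ) → Fin N × Fin N → W :=
  fun x p => ∑ r : Fin N × Fin N, ∑ μ ∈ M, R (x + s • μ) p r • π μ (u x r)

/- ---- the commuting operators I_n ---- -/

/-- sum of basis vectors δ_{σ(i)} over factors with 0-based positions in [s,t) -/
def hsum (p : ℕ) (s t : ℕ) (σ : Fin p → Fin N) : Fin N → ℂ :=
  ∑ i : Fin p, if s ≤ (i : ℕ) ∧ (i : ℕ) < t then (Pi.single (σ i) 1 : Fin N → ℂ) else 0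

/-- R̂ = P·R placed in (0-based) factors a, b of (ℂ^N)^{⊗p}, with σ-dependent
    evaluation point `f σ` -/
def RhatPair (R : (Fin N → ℂ) → Matrix (Fin N × Fin N) (Fin N × Fin N) ℂ)
    (p : ℕ) (a b : ℕ) (f : (Fin p → Fin N) → Fin N → ℂ) :
    Matrix (Fin p → Fin N) (Fin p → Fin N) ℂ :=
  if h : a < p ∧ b < p then
    Matrix.of fun σ σ' =>
      if ∀ i : Fin p, (i : ℕ) ≠ a → (i : ℕ) ≠ b → σ i = σ' i then
        R (f σ) (σ ⟨b, h.2⟩, σ ⟨a, h.1⟩) (σ' ⟨a, h.1⟩, σ' ⟨b, h.2⟩)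
      else 0
  else 1

/-- 𝓘^{(k,l)} (1-based labels k..l):
    R̂_{k,k+1}(·−2γh^{(k+2,l)}) ⋯ R̂_{l−1,l}(·), with evaluation point `base σ` -/
def calI (R : (Fin N → ℂ) → Matrix (Fin N × Fin N) (Fin N × Fin N) ℂ)
    (p : ℕ) (k l : ℕ) (base : (Fin p → Fin N) → Fin N → ℂ) :
    Matrix (Fin p → Fin N) (Fin p → Fin N) ℂ :=
  ((List.range' k (l - k)).map (fun j =>
    RhatPair N R p (j - 1) j
      (fun σ => base σ - (2 * γ) • hsum N p (j + 1) l σ))).prod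

/-- the Lax operator L placed in auxiliary factor a of (ℂ^N)^{⊗n} ⊗ V -/
def LopAux (L : Fin N → Fin N → (Vsp N W →ₗ[ℂ] Vsp N W)) (n : ℕ) (a : Fin n)
    (u : (Fin N → ℂ) → (Fin n → Fin N) → W) : (Fin N → ℂ) → (Fin n → Fin N) → W :=
  fun x σ => ∑ b : Fin N, L (σ a) b (fun y => u y (Function.update σ a b)) x

/-- the composition L₁ L₂ ⋯ L_n -/
def LopChain (L : Fin N → Fin N → (Vsp N W →ₗ[ℂ] Vsp N W)) (n : ℕ) :
    ((Fin N → ℂ) → (Fin n → Fin N) → W) → ((Fin N → ℂ) → (Fin n → Fin N) → W) :=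
  (List.finRange n).foldr (fun a f => LopAux N L n a ∘ f) id

/-- multiplication by a matrix-valued function of x on the auxiliary factors -/
def mulMat (n : ℕ) (A : (Fin N → ℂ) → Matrix (Fin n → Fin N) (Fin n → Fin N) ℂ)
    (u : (Fin N → ℂ) → (Fin n → Fin N) → W) : (Fin N → ℂ) → (Fin n → Fin N) → W :=
  fun x σ => ∑ σ' : Fin n → Fin N, A x σ σ' • u x σ'

/-- embedding of V into (ℂ^N)^{⊗n} ⊗ V at auxiliary basis index σ -/
def emb (n : ℕ) (σ : Fin n → Fin N) (u : Vsp N W) :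
    (Fin N → ℂ) → (Fin n → Fin N) → W :=
  fun x σ' => if σ' = σ then u x else 0

/-- I_n = Tr_{1…n}[ L₁ ⋯ L_n R̂_{12}(x−2γh^{(3,n)}) ⋯ R̂_{n−1,n}(x) ] ∈ End(V) -/
def In (R : (Fin N → ℂ) → Matrix (Fin N × Fin N) (Fin N × Fin N) ℂ)
    (L : Fin N → Fin N → (Vsp N W →ₗ[ℂ] Vsp N W)) (n : ℕ) (u : Vsp N W) : Vsp N W :=
  fun x => ∑ σ : Fin n → Fin N,
    LopChain N L n
      (mulMat N n (fun y => calI N γ R n 1 n (fun _ => y)) (emb N n σ u)) x σ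

/- ---- auxiliary lemmas for the proof ---- -/

/-- total weight Σ_i δ_{σ i} of an auxiliary basis index -/
def Swt (N p : ℕ) (σ : Fin p → Fin N) : Fin N → ℂ :=
  ∑ i : Fin p, (Pi.single (σ i) 1 : Fin N → ℂ)

/-- a matrix on the auxiliary space preserves total weight -/
def WtPres (N p : ℕ) (A : Matrix (Fin p → Fin N) (Fin p → Fin N) ℂ) : Prop :=
  ∀ τ ρ, A τ ρ ≠ 0 → Swt N p τ = Swt N p ρ

lemma wtPres_one (p : ℕ) : WtPres N p 1 := by
  intro τ ρ h
  by_cases hτρ : τ = ρ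
  · rw [hτρ]
  · exact absurd (Matrix.one_apply_ne hτρ) h

lemma wtPres_mul {p : ℕ} {A B : Matrix (Fin p → Fin N) (Fin p → Fin N) ℂ}
    (hA : WtPres N p A) (hB : WtPres N p B) : WtPres N p (A * B) := by
  intro τ ρ h
  rw [Matrix.mul_apply] at h
  obtain ⟨κ, -, hκ⟩ := Finset.exists_ne_zero_of_sum_ne_zero h
  rcases mul_ne_zero_iff.mp hκ with ⟨h1, h2⟩
  exact (hA τ κ h1).trans (hB κ ρ h2)

lemma wtPres_prod {p : ℕ} :
    ∀ l : List (Matrix (Fin p → Fin N) (Fin p → Fin N) ℂ),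
      (∀ A ∈ l, WtPres N p A) → WtPres N p l.prod := by
  intro l
  induction l with
  | nil => intro _; simpa using wtPres_one N p
  | cons A l ih =>
    intro h
    rw [List.prod_cons]
    exact wtPres_mul N (h A List.mem_cons_self) (ih fun B hB => h B (List.mem_cons_of_mem A hB))

lemma Swt_eq_of_pair {p : ℕ} (τ ρ : Fin p → Fin N) (A B : Fin p) (hAB : A ≠ B)
    (hoff : ∀ i, i ≠ A → i ≠ B → τ i = ρ i)
    (hpair : (Pi.single (τ A) 1 : Fin N → ℂ) + Pi.single (τ B) 1 =
             (Pi.single (ρ A) 1 : Fin N → ℂ) + Pi.single (ρ B) 1) :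
    Swt N p τ = Swt N p ρ := by
  have key : Swt N p τ - Swt N p ρ = 0 := by
    unfold Swt
    rw [← Finset.sum_sub_distrib]
    rw [← Finset.sum_subset (Finset.subset_univ ({A, B} : Finset (Fin p)))]
    · rw [Finset.sum_pair hAB]
      have : ((Pi.single (τ A) 1 : Fin N → ℂ) + Pi.single (τ B) 1) -
          ((Pi.single (ρ A) 1 : Fin N → ℂ) + Pi.single (ρ B) 1) = 0 := by
        rw [hpair, sub_self]
      calc ((Pi.single (τ A) 1 : Fin N → ℂ) - Pi.single (ρ A) 1) +
            ((Pi.single (τ B) 1 : Fin N → ℂ) - Pi.single (ρ B) 1)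
          = ((Pi.single (τ A) 1 : Fin N → ℂ) + Pi.single (τ B) 1) -
            ((Pi.single (ρ A) 1 : Fin N → ℂ) + Pi.single (ρ B) 1) := by abel
        _ = 0 := this
    · intro i _ hi
      simp only [Finset.mem_insert, Finset.mem_singleton, not_or] at hi
      rw [hoff i hi.1 hi.2, sub_self]
  exact sub_eq_zero.mp key

lemma wtPres_RhatPair (R : (Fin N → ℂ) → Matrix (Fin N × Fin N) (Fin N × Fin N) ℂ)
    (hzw : ZeroWeight N R) (p a b : ℕ) (hab : a ≠ b)
    (f : (Fin p → Fin N) → Fin N → ℂ) : WtPres N p (RhatPair N R p a b f) := by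
  intro τ ρ h
  unfold RhatPair at h
  by_cases hp : a < p ∧ b < p
  · rw [dif_pos hp, Matrix.of_apply] at h
    by_cases hoff : ∀ i : Fin p, (i : ℕ) ≠ a → (i : ℕ) ≠ b → τ i = ρ i
    · rw [if_pos hoff] at h
      set A : Fin p := ⟨a, hp.1⟩
      set B : Fin p := ⟨b, hp.2⟩
      have hAB : A ≠ B := by
        intro hh
        exact hab (congrArg Fin.val hh)
      have hpair : (Pi.single (τ B) 1 : Fin N → ℂ) + Pi.single (τ A) 1 =
          (Pi.single (ρ A) 1 : Fin N → ℂ) + Pi.single (ρ B) 1 := by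
        by_contra hne
        exact h (hzw _ _ _ _ _ hne)
      refine Swt_eq_of_pair N τ ρ A B hAB ?_ ?_
      · intro i hiA hiB
        exact hoff i (fun e => hiA (Fin.ext e)) (fun e => hiB (Fin.ext e))
      · rw [add_comm ((Pi.single (τ B) 1 : Fin N → ℂ)) _] at hpair
        exact hpair
    · rw [if_neg hoff] at h
      exact absurd rfl h
  · rw [dif_neg hp] at h
    exact wtPres_one N p τ ρ h

lemma wtPres_calI (R : (Fin N → ℂ) → Matrix (Fin N × Fin N) (Fin N × Fin N) ℂ)
    (hzw : ZeroWeight N R) (p k l : ℕ) (hk : 1 ≤ k)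
    (base : (Fin p → Fin N) → Fin N → ℂ) :
    WtPres N p (calI N γ R p k l base) := by
  unfold calI
  apply wtPres_prod
  intro A hA
  simp only [List.mem_map] at hA
  obtain ⟨j, hj, rfl⟩ := hA
  rw [List.mem_range'_1] at hj
  have hj1 : 1 ≤ j := le_trans hk hj.1
  exact wtPres_RhatPair N R hzw p (j - 1) j
    (Nat.ne_of_lt (Nat.sub_lt hj1 one_pos)) _

lemma Swt_update {p : ℕ} (τ : Fin p → Fin N) (a : Fin p) (b : Fin N) :
    Swt N p (Function.update τ a b) =
      Swt N p τ - Pi.single (τ a) 1 + Pi.single b 1 := by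
  unfold Swt
  have h1 : (fun i => (Pi.single (Function.update τ a b i) 1 : Fin N → ℂ)) =
      Function.update (fun i => (Pi.single (τ i) 1 : Fin N → ℂ)) a (Pi.single b 1) := by
    funext i
    rcases eq_or_ne i a with rfl | hi
    · simp
    · simp [Function.update_of_ne hi]
  have h2 : ∑ i : Fin p, (Pi.single (Function.update τ a b i) 1 : Fin N → ℂ) =
      ∑ i : Fin p, Function.update (fun i => (Pi.single (τ i) 1 : Fin N → ℂ)) a
        (Pi.single b 1) i := by
    rw [h1]
  rw [h2, Finset.sum_update_of_mem (Finset.mem_univ a)]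
  have h3 : ∑ i : Fin p, (Pi.single (τ i) 1 : Fin N → ℂ) =
      (∑ i ∈ Finset.univ \ {a}, (Pi.single (τ i) 1 : Fin N → ℂ)) + Pi.single (τ a) 1 := by
    rw [Finset.sum_eq_sum_sdiff_singleton_add (Finset.mem_univ a)]
  rw [h3]
  abel

lemma chain_wt (π : (Fin N → ℂ) → Module.End ℂ W)
    (L : Fin N → Fin N → (Vsp N W →ₗ[ℂ] Vsp N W))
    (hgr : ∀ (a b : Fin N) (μ : Fin N → ℂ) (u : Vsp N W),
      (∀ x, π μ (u x) = u x) →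
      ∀ x, π (μ - (Pi.single a 1 : Fin N → ℂ) + Pi.single b 1) (L a b u x) = L a b u x)
    (n : ℕ) (c : Fin N → ℂ) :
    ∀ (l : List (Fin n)) (v : (Fin N → ℂ) → (Fin n → Fin N) → W),
      (∀ x τ, π (c - Swt N n τ) (v x τ) = v x τ) →
      ∀ x τ, π (c - Swt N n τ)
          ((List.foldr (fun a f => LopAux N L n a ∘ f) id l v) x τ) =
        (List.foldr (fun a f => LopAux N L n a ∘ f) id l v) x τ := by
  intro l
  induction l with
  | nil => intro v hv; exact hv
  | cons a l ih =>
    intro v hv x τ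
    have hg := ih v hv
    show π (c - Swt N n τ)
        (LopAux N L n a (List.foldr (fun a f => LopAux N L n a ∘ f) id l v) x τ) = _
    unfold LopAux
    rw [map_sum]
    refine Finset.sum_congr rfl fun b _ => ?_
    have key := hgr (τ a) b (c - Swt N n (Function.update τ a b))
      (fun y => (List.foldr (fun a f => LopAux N L n a ∘ f) id l v) y (Function.update τ a b))
      (fun y => hg y (Function.update τ a b)) x
    have heq : c - Swt N n (Function.update τ a b) - (Pi.single (τ a) 1 : Fin N → ℂ)
        + Pi.single b 1 = c - Swt N n τ := by
      rw [Swt_update]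
      abel
    rw [← heq]
    exact key

theorem In_preserves_zero_weight_subspace (hN : 2 ≤ N)
    (R : (Fin N → ℂ) → Matrix (Fin N × Fin N) (Fin N × Fin N) ℂ)
    (hzw : ZeroWeight N R) (htr : TransInv N R) (hybe : DYBE N γ R)
    -- the graded quantum space W = ⊕_{μ∈M} W_μ, with 0 ∈ M
    (M : Finset (Fin N → ℂ)) (h0M : (0 : Fin N → ℂ) ∈ M)
    (π : (Fin N → ℂ) → Module.End ℂ W)
    (hidem : ∀ μ, π μ ∘ₗ π μ = π μ)
    (horth : ∀ μ ν, μ ≠ ν → π μ ∘ₗ π ν = 0)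
    (hcompl : (∑ μ ∈ M, π μ) = LinearMap.id)
    (hsupp : ∀ μ ∉ M, π μ = 0)
    (L : Fin N → Fin N → (Vsp N W →ₗ[ℂ] Vsp N W))
    -- (iv) grading condition on L
    (hgr : ∀ (a b : Fin N) (μ : Fin N → ℂ) (u : Vsp N W),
      (∀ x, π μ (u x) = u x) →
      ∀ x, π (μ - (Pi.single a 1 : Fin N → ℂ) + Pi.single b 1) (L a b u x) = L a b u x)
    -- (v) shift properties of L
    (hshift1 : ∀ (f : (Fin N → ℂ) → ℂ) (a b : Fin N) (u : Vsp N W),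
      Phi N M π (-γ) f (L a b u) =
        L a b (Phi N M π (-γ) (fun y => f (y - (2*γ) • (Pi.single b 1 : Fin N → ℂ))) u))
    (hshift2 : ∀ (f : (Fin N → ℂ) → ℂ) (a b : Fin N) (u : Vsp N W),
      Phi N M π γ (fun y => f (y + (2*γ) • (Pi.single a 1 : Fin N → ℂ))) (L a b u) =
        L a b (Phi N M π γ f u))
    -- (vi) the quantum Lax relation R₁₂(x+γh^{(q)}) L₁ L₂ = L₂ L₁ R₁₂(x−γh^{(q)})
    (hRLL : ∀ u : (Fin N → ℂ) → Fin N × Fin N → W,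
      Rop N R M π γ (Lax1 N L (Lax2 N L u)) =
        Lax2 N L (Lax1 N L (Rop N R M π (-γ) u))) :
    ∀ n : ℕ, 1 ≤ n → ∀ u : Vsp N W, inV0 N π u → inV0 N π (In N γ R L n u) := by
  intro n hn u hu x
  unfold In
  rw [map_sum]
  refine Finset.sum_congr rfl fun σ _ => ?_
  have hv : ∀ y τ, π (Swt N n σ - Swt N n τ)
      ((mulMat N n (fun y => calI N γ R n 1 n fun _ => y) (emb N n σ u)) y τ) =
      (mulMat N n (fun y => calI N γ R n 1 n fun _ => y) (emb N n σ u)) y τ := by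
    intro y τ
    have hsimp : (mulMat N n (fun y => calI N γ R n 1 n fun _ => y) (emb N n σ u)) y τ =
        calI N γ R n 1 n (fun _ => y) τ σ • u y := by
      unfold mulMat
      rw [Finset.sum_eq_single σ]
      · simp [emb]
      · intro σ' _ hne
        simp [emb, hne]
      · intro habs
        exact absurd (Finset.mem_univ σ) habs
    rw [hsimp]
    by_cases hw : Swt N n σ = Swt N n τ
    · rw [hw, sub_self, _root_.map_smul, hu y]
    · have hz : calI N γ R n 1 n (fun _ => y) τ σ = 0 := by
        by_contra hc
        exact hw (wtPres_calI N γ R hzw n 1 n le_rfl _ τ σ hc).symm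
      simp [hz]
  have hch := chain_wt N π L hgr n (Swt N n σ) (List.finRange n)
    (mulMat N n (fun y => calI N γ R n 1 n fun _ => y) (emb N n σ u)) hv x σ
  rw [sub_self] at hch
  exact hch
end
end

section
/- Lemma 1 of the main theorem: under hypotheses (i)–(vi) of the stated setting, for all n, m ≥ 1 and every u in the zero-weight subspace V_0, one has I_n(I_m u) = Tr_{1…n+m}[ L_1 ⋯ L_n L_{n+1} ⋯ L_{n+m} · ℐ^{(1,n)}(x−2γh^{(n+1,n+m)}) · ℐ^{(n+1,n+m)}(x) ] u, where for k < l, ℐ^{(k,l)}(x) := R̂_{k,k+1}(x−2γh^{(k+2,l)}) R̂_{k+1,k+2}(x−2γh^{(k+3,l)}) ⋯ R̂_{l−1,l}(x), and ℐ^{(1,n)}(x−2γh^{(n+1,n+m)}) denotes ℐ^{(1,n)} with its argument additionally shifted according to the basis indices in factors n+1,…,n+m; here I_n and I_m are realized on the auxiliary factors 1,…,n and n+1,…,n+m respectively. -/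
/- STATEMENT 14: Lemma 1 of the main theorem: under hypotheses (i)–(vi),
   for u in the zero-weight subspace V₀,
   I_n(I_m u) = Tr_{1…n+m}[ L_1 ⋯ L_{n+m} 𝓘^{(1,n)}(x−2γh^{(n+1,n+m)})
                            𝓘^{(n+1,n+m)}(x) ] u,
   with I_n, I_m realized on auxiliary factors 1..n and n+1..n+m. -/

noncomputable section
open Matrix Complex
open scoped BigOperators

variable (N : ℕ) (γ : ℂ)
variable {W : Type} [AddCommGroup W] [Module ℂ W]

/-- the combined operator
    Tr_{1…n+m}[ L₁ ⋯ L_{n+m} 𝓘^{(1,n)}(x−2γh^{(n+1,n+m)}) 𝓘^{(n+1,n+m)}(x) ] -/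
def Inm (R : (Fin N → ℂ) → Matrix (Fin N × Fin N) (Fin N × Fin N) ℂ)
    (L : Fin N → Fin N → (Vsp N W →ₗ[ℂ] Vsp N W)) (n m : ℕ) (u : Vsp N W) : Vsp N W :=
  fun x => ∑ σ : Fin (n + m) → Fin N,
    LopChain N L (n + m)
      (mulMat N (n + m)
        (fun y =>
          calI N γ R (n + m) 1 n
              (fun σ' => y - (2 * γ) • hsum N (n + m) n (n + m) σ') *
            calI N γ R (n + m) (n + 1) (n + m) (fun _ => y))
        (emb N (n + m) σ u)) x σ

namespace Lemma1Aux

lemma finRange_map_val (p : ℕ) : (List.finRange p).map Fin.val = List.range p := by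
  rw [List.finRange_eq_pmap_range, List.map_pmap, List.pmap_eq_map]
  simp

lemma finRange_split (n m : ℕ) :
    List.finRange (n+m) = ((List.finRange n).map (fun a => (⟨a.1, by omega⟩ : Fin (n+m))))
      ++ ((List.finRange m).map (fun j => (⟨n + j.1, by omega⟩ : Fin (n+m)))) := by
  apply List.map_injective_iff.mpr (Fin.val_injective (n := n+m))
  rw [List.map_append, List.map_map, List.map_map, finRange_map_val, List.range_add]
  congr 1
  · exact (finRange_map_val n).symm
  · rw [← finRange_map_val m, List.map_map]; rfl

variable {N : ℕ}

def glue {n m : ℕ} (ρ : Fin n → Fin N) (β : Fin m → Fin N) : Fin (n+m) → Fin N :=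
  fun i => if h : (i : ℕ) < n then ρ ⟨i, h⟩ else β ⟨(i : ℕ) - n, by have := i.2; omega⟩

lemma glue_lt {n m : ℕ} (ρ : Fin n → Fin N) (β : Fin m → Fin N) (i : Fin (n+m))
    (h : (i : ℕ) < n) : glue ρ β i = ρ ⟨i, h⟩ := dif_pos h

lemma glue_ge {n m : ℕ} (ρ : Fin n → Fin N) (β : Fin m → Fin N) (i : Fin (n+m))
    (h : ¬ (i : ℕ) < n) : glue ρ β i = β ⟨(i : ℕ) - n, by have := i.2; omega⟩ := dif_neg h

lemma glue_inl {n m : ℕ} (ρ : Fin n → Fin N) (β : Fin m → Fin N) (a : Fin n) :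
    glue ρ β ⟨a.1, by omega⟩ = ρ a := by
  rw [glue_lt (h := a.2)]

lemma glue_inr {n m : ℕ} (ρ : Fin n → Fin N) (β : Fin m → Fin N) (j : Fin m) :
    glue ρ β ⟨n + j.1, by omega⟩ = β j := by
  rw [glue_ge _ _ _ (show ¬ n + j.1 < n by omega)]
  congr 1
  exact Fin.ext (show n + j.1 - n = j.1 by omega)

lemma glue_update_inl {n m : ℕ} (ρ : Fin n → Fin N) (β : Fin m → Fin N) (a : Fin n)
    (b : Fin N) :
    Function.update (glue ρ β) (⟨a.1, by omega⟩ : Fin (n+m)) b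
      = glue (Function.update ρ a b) β := by
  funext i
  simp only [Function.update_apply, glue]
  split_ifs <;> simp_all [Fin.ext_iff] <;> omega

lemma glue_update_inr {n m : ℕ} (ρ : Fin n → Fin N) (β : Fin m → Fin N) (j : Fin m)
    (b : Fin N) :
    Function.update (glue ρ β) (⟨n + j.1, by omega⟩ : Fin (n+m)) b
      = glue ρ (Function.update β j b) := by
  funext i
  simp only [Function.update_apply, glue]
  split_ifs <;> simp_all [Fin.ext_iff] <;> omega

def glueEquiv (N n m : ℕ) : ((Fin n → Fin N) × (Fin m → Fin N)) ≃ (Fin (n+m) → Fin N) where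
  toFun p := glue p.1 p.2
  invFun σ := (fun a => σ ⟨a.1, by omega⟩, fun j => σ ⟨n + j.1, by omega⟩)
  left_inv p := by
    refine Prod.ext (funext fun a => ?_) (funext fun j => ?_)
    · exact glue_inl p.1 p.2 a
    · exact glue_inr p.1 p.2 j
  right_inv σ := by
    funext i
    show glue _ _ i = σ i
    by_cases hi : (i : ℕ) < n
    · rw [glue_lt _ _ _ hi]
    · rw [glue_ge _ _ _ hi]
      show σ _ = σ i
      congr 1
      exact Fin.ext (show n + ((i:ℕ) - n) = (i:ℕ) by have := i.2; omega)

end Lemma1Aux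
namespace Lemma1Aux

section HsumGlue

variable {N n m : ℕ}

/-- total weight vector of an index configuration -/
def Hm {N m : ℕ} (β : Fin m → Fin N) : Fin N → ℂ := ∑ j, Pi.single (β j) 1

lemma hsum_glue_left (ρ : Fin n → Fin N) (β : Fin m → Fin N) (s t : ℕ) (ht : t ≤ n) :
    hsum N (n+m) s t (glue ρ β) = hsum N n s t ρ := by
  unfold hsum
  rw [Fin.sum_univ_add]
  have h2 : (∑ j : Fin m, if s ≤ ((Fin.natAdd n j : Fin (n+m)) : ℕ) ∧
      ((Fin.natAdd n j : Fin (n+m)) : ℕ) < t then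
      (Pi.single (glue ρ β (Fin.natAdd n j)) 1 : Fin N → ℂ) else 0) = 0 := by
    refine Finset.sum_eq_zero fun j _ => if_neg ?_
    show ¬ (s ≤ n + (j:ℕ) ∧ n + (j:ℕ) < t)
    omega
  rw [h2, add_zero]
  refine Finset.sum_congr rfl fun i _ => ?_
  have hv : ((Fin.castAdd m i : Fin (n+m)) : ℕ) = (i : ℕ) := rfl
  rw [hv]
  by_cases hc : s ≤ (i:ℕ) ∧ (i:ℕ) < t
  · rw [if_pos hc, if_pos hc, glue_lt _ _ _ (show ((Fin.castAdd m i : Fin (n+m)) : ℕ) < n from i.2)]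
    simp
  · rw [if_neg hc, if_neg hc]

lemma hsum_glue_right (ρ : Fin n → Fin N) (β : Fin m → Fin N) (s t : ℕ) (hs : n ≤ s) :
    hsum N (n+m) s t (glue ρ β) = hsum N m (s-n) (t-n) β := by
  unfold hsum
  rw [Fin.sum_univ_add]
  have h1 : (∑ i : Fin n, if s ≤ ((Fin.castAdd m i : Fin (n+m)) : ℕ) ∧
      ((Fin.castAdd m i : Fin (n+m)) : ℕ) < t then
      (Pi.single (glue ρ β (Fin.castAdd m i)) 1 : Fin N → ℂ) else 0) = 0 := by
    refine Finset.sum_eq_zero fun i _ => if_neg ?_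
    show ¬ (s ≤ (i:ℕ) ∧ (i:ℕ) < t)
    have := i.2
    omega
  rw [h1, zero_add]
  refine Finset.sum_congr rfl fun j _ => ?_
  have hv : ((Fin.natAdd n j : Fin (n+m)) : ℕ) = n + (j:ℕ) := rfl
  rw [hv]
  have hcond : (s ≤ n + (j:ℕ) ∧ n + (j:ℕ) < t) ↔ (s - n ≤ (j:ℕ) ∧ (j:ℕ) < t - n) := by omega
  by_cases hc : s - n ≤ (j:ℕ) ∧ (j:ℕ) < t - n
  · rw [if_pos (hcond.mpr hc), if_pos hc]
    have : glue ρ β (Fin.natAdd n j) = β j := by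
      rw [glue_ge _ _ _ (show ¬ ((Fin.natAdd n j : Fin (n+m)) : ℕ) < n by simp [Fin.natAdd])]
      congr 1
      exact Fin.ext (show n + (j:ℕ) - n = (j:ℕ) by omega)
    rw [this]
  · rw [if_neg (fun hcc => hc (hcond.mp hcc)), if_neg hc]

lemma hsum_glue_tail (ρ : Fin n → Fin N) (β : Fin m → Fin N) :
    hsum N (n+m) n (n+m) (glue ρ β) = Hm β := by
  rw [hsum_glue_right ρ β n (n+m) le_rfl]
  unfold hsum Hm
  refine Finset.sum_congr rfl fun j _ => ?_
  rw [if_pos (by omega : n - n ≤ (j:ℕ) ∧ (j:ℕ) < n + m - n)]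

lemma hsum_full (β : Fin m → Fin N) : hsum N m 0 m β = Hm β := by
  unfold hsum Hm
  exact Finset.sum_congr rfl fun j _ => if_pos (by omega)

end HsumGlue

section Chains

variable (N : ℕ) {W : Type} [AddCommGroup W] [Module ℂ W]
variable (L : Fin N → Fin N → (Vsp N W →ₗ[ℂ] Vsp N W))

def chainL {p : ℕ} (l : List (Fin p)) :
    ((Fin N → ℂ) → (Fin p → Fin N) → W) → ((Fin N → ℂ) → (Fin p → Fin N) → W) :=
  l.foldr (fun a f => LopAux N L p a ∘ f) id

lemma chainL_nil {p : ℕ} (v : (Fin N → ℂ) → (Fin p → Fin N) → W) :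
    chainL N L ([] : List (Fin p)) v = v := rfl

lemma chainL_cons {p : ℕ} (a : Fin p) (l : List (Fin p))
    (v : (Fin N → ℂ) → (Fin p → Fin N) → W) :
    chainL N L (a :: l) v = LopAux N L p a (chainL N L l v) := rfl

lemma LopChain_eq (p : ℕ) : LopChain N L p = chainL N L (List.finRange p) := rfl

lemma chainL_append {p : ℕ} (l₁ l₂ : List (Fin p))
    (v : (Fin N → ℂ) → (Fin p → Fin N) → W) :
    chainL N L (l₁ ++ l₂) v = chainL N L l₁ (chainL N L l₂ v) := by
  induction l₁ with
  | nil => rfl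
  | cons a l ih => rw [List.cons_append, chainL_cons, chainL_cons, ih]

lemma chainL_locality {p : ℕ} (l : List (Fin p)) (w₁ w₂ : (Fin N → ℂ) → (Fin p → Fin N) → W)
    (x : Fin N → ℂ) (β : Fin p → Fin N)
    (h : ∀ y β', (∀ i, i ∉ l → β' i = β i) → w₁ y β' = w₂ y β') :
    chainL N L l w₁ x β = chainL N L l w₂ x β := by
  induction l generalizing x β with
  | nil => exact h x β fun i _ => rfl
  | cons a l ih =>
    rw [chainL_cons, chainL_cons]
    show ∑ b : Fin N, _ = ∑ b : Fin N, _
    refine Finset.sum_congr rfl fun b _ =>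
      congrArg (fun (g : Vsp N W) => L (β a) b g x) (funext fun y => ih y (Function.update β a b) ?_)
    intro z β' hβ'
    refine h z β' fun i hi => ?_
    have hia : i ≠ a := fun hc => hi (hc ▸ (List.mem_cons_self (a := a) (l := l)))
    have hil : i ∉ l := fun hc => hi (List.mem_cons_of_mem a hc)
    rw [hβ' i hil, Function.update_apply, if_neg hia]

lemma chainL_sum {p : ℕ} {ι : Type*} (l : List (Fin p)) (S : Finset ι)
    (v : ι → (Fin N → ℂ) → (Fin p → Fin N) → W) (x : Fin N → ℂ) (β : Fin p → Fin N) :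
    chainL N L l (fun y β' => ∑ s ∈ S, v s y β') x β
      = ∑ s ∈ S, chainL N L l (v s) x β := by
  induction l generalizing x β with
  | nil => rfl
  | cons a l ih =>
    rw [chainL_cons]
    show (∑ b : Fin N, L (β a) b
        (fun y => chainL N L l (fun z β' => ∑ s ∈ S, v s z β') y (Function.update β a b)) x) = _
    have hstep : ∀ b : Fin N,
        (fun y => chainL N L l (fun z β' => ∑ s ∈ S, v s z β') y (Function.update β a b))
          = (∑ s ∈ S, fun y => chainL N L l (v s) y (Function.update β a b)) := by
      intro b
      funext y
      rw [Finset.sum_apply]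
      exact ih y (Function.update β a b)
    calc (∑ b : Fin N, L (β a) b
        (fun y => chainL N L l (fun z β' => ∑ s ∈ S, v s z β') y (Function.update β a b)) x)
        = ∑ b : Fin N, ∑ s ∈ S,
            L (β a) b (fun y => chainL N L l (v s) y (Function.update β a b)) x := by
          refine Finset.sum_congr rfl fun b _ => ?_
          rw [hstep b, map_sum]
          rw [Finset.sum_apply]
      _ = ∑ s ∈ S, ∑ b : Fin N,
            L (β a) b (fun y => chainL N L l (v s) y (Function.update β a b)) x :=
          Finset.sum_comm
      _ = ∑ s ∈ S, chainL N L (a :: l) (v s) x β := rfl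

end Chains

end Lemma1Aux
namespace Lemma1Aux

section Transport

variable (N : ℕ) {W : Type} [AddCommGroup W] [Module ℂ W]
variable (L : Fin N → Fin N → (Vsp N W →ₗ[ℂ] Vsp N W))

lemma LopAux_apply {p : ℕ} (a : Fin p) (u : (Fin N → ℂ) → (Fin p → Fin N) → W)
    (x : Fin N → ℂ) (σ : Fin p → Fin N) :
    LopAux N L p a u x σ = ∑ b : Fin N, L (σ a) b (fun y => u y (Function.update σ a b)) x :=
  rfl

lemma chainL_inl {n m : ℕ} (l : List (Fin n)) (V : (Fin N → ℂ) → (Fin (n+m) → Fin N) → W)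
    (β : Fin m → Fin N) (x : Fin N → ℂ) (ρ : Fin n → Fin N) :
    chainL N L (l.map (fun a => (⟨a.1, by omega⟩ : Fin (n+m)))) V x (glue ρ β)
      = chainL N L l (fun y ρ' => V y (glue ρ' β)) x ρ := by
  induction l generalizing x ρ with
  | nil => rfl
  | cons a l ih =>
    rw [List.map_cons, chainL_cons, chainL_cons, LopAux_apply, LopAux_apply]
    refine Finset.sum_congr rfl fun b _ => ?_
    rw [glue_update_inl, glue_inl]
    exact congrArg (fun g : Vsp N W => L (ρ a) b g x)
      (funext fun y => ih y (Function.update ρ a b))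

lemma chainL_inr {n m : ℕ} (l : List (Fin m)) (V : (Fin N → ℂ) → (Fin (n+m) → Fin N) → W)
    (ρ : Fin n → Fin N) (x : Fin N → ℂ) (β : Fin m → Fin N) :
    chainL N L (l.map (fun j => (⟨n + j.1, by omega⟩ : Fin (n+m)))) V x (glue ρ β)
      = chainL N L l (fun y β' => V y (glue ρ β')) x β := by
  induction l generalizing x β with
  | nil => rfl
  | cons a l ih =>
    rw [List.map_cons, chainL_cons, chainL_cons, LopAux_apply, LopAux_apply]
    refine Finset.sum_congr rfl fun b _ => ?_
    rw [glue_update_inr, glue_inr]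
    exact congrArg (fun g : Vsp N W => L (β a) b g x)
      (funext fun y => ih y (Function.update β a b))

lemma chain_split {n m : ℕ} (V : (Fin N → ℂ) → (Fin (n+m) → Fin N) → W)
    (x : Fin N → ℂ) (τ : Fin n → Fin N) (σm : Fin m → Fin N) :
    LopChain N L (n+m) V x (glue τ σm)
      = LopChain N L n
          (fun y ρ' => LopChain N L m (fun z β' => V z (glue ρ' β')) y σm) x τ := by
  rw [LopChain_eq, finRange_split, chainL_append, chainL_inl]
  have h2 : (fun y ρ' => chainL N L ((List.finRange m).map
        (fun j => (⟨n + j.1, by omega⟩ : Fin (n+m)))) V y (glue ρ' σm))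
      = (fun y (ρ' : Fin n → Fin N) =>
          chainL N L (List.finRange m) (fun z β' => V z (glue ρ' β')) y σm) :=
    funext fun y => funext fun ρ' => chainL_inr N L (List.finRange m) V ρ' y σm
  rw [h2]
  rfl

end Transport

end Lemma1Aux
namespace Lemma1Aux

section Core

variable (N : ℕ) (γ : ℂ) {W : Type} [AddCommGroup W] [Module ℂ W]
variable (M : Finset (Fin N → ℂ)) (π : (Fin N → ℂ) → Module.End ℂ W)
variable (L : Fin N → Fin N → (Vsp N W →ₗ[ℂ] Vsp N W))

lemma Phi_eval (horth : ∀ μ ν, μ ≠ ν → π μ ∘ₗ π ν = 0)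
    (u : Vsp N W) (μ : Fin N → ℂ) (hμ : μ ∈ M) (hu : ∀ x, π μ (u x) = u x)
    (s : ℂ) (f : (Fin N → ℂ) → ℂ) :
    Phi N M π s f u = fun x => f (x + s • μ) • u x := by
  funext x
  unfold Phi
  rw [Finset.sum_eq_single μ]
  · rw [hu x]
  · intro ν _ hne
    have h0 : π ν (u x) = 0 := by
      rw [← hu x]
      have := LinearMap.ext_iff.mp (horth ν μ hne) (u x)
      rw [LinearMap.zero_apply] at this
      exact this
    rw [h0, smul_zero]
  · intro h; exact absurd hμ h

lemma lemA_homog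
    (horth : ∀ μ ν, μ ≠ ν → π μ ∘ₗ π ν = 0)
    (hsupp : ∀ μ ∉ M, π μ = 0)
    (hgr : ∀ (a b : Fin N) (μ : Fin N → ℂ) (u : Vsp N W),
      (∀ x, π μ (u x) = u x) →
      ∀ x, π (μ - (Pi.single a 1 : Fin N → ℂ) + Pi.single b 1) (L a b u x) = L a b u x)
    (hshift1 : ∀ (f : (Fin N → ℂ) → ℂ) (a b : Fin N) (u : Vsp N W),
      Phi N M π (-γ) f (L a b u) =
        L a b (Phi N M π (-γ) (fun y => f (y - (2*γ) • (Pi.single b 1 : Fin N → ℂ))) u))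
    (f : (Fin N → ℂ) → ℂ) (a b : Fin N) (u : Vsp N W)
    (μ : Fin N → ℂ) (hμ : μ ∈ M) (hu : ∀ x, π μ (u x) = u x) :
    (fun x => f x • L a b u x)
      = L a b (fun y =>
          f (y - γ • ((Pi.single a 1 : Fin N → ℂ) + Pi.single b 1)) • u y) := by
  set μ' : Fin N → ℂ := μ - Pi.single a 1 + Pi.single b 1 with hμ'def
  have hw : ∀ x, π μ' (L a b u x) = L a b u x := hgr a b μ u hu
  by_cases hμ'M : μ' ∈ M
  · set F : (Fin N → ℂ) → ℂ := fun y => f (y + γ • μ') with hF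
    have key := hshift1 F a b u
    rw [Phi_eval N M π horth (L a b u) μ' hμ'M hw (-γ) F,
      Phi_eval N M π horth u μ hμ hu (-γ)
        (fun y => F (y - (2*γ) • (Pi.single b 1 : Fin N → ℂ)))] at key
    have e1 : ∀ x : Fin N → ℂ, x + (-γ) • μ' + γ • μ' = x := by intro x; module
    have e2 : ∀ x : Fin N → ℂ,
        x + (-γ) • μ - (2*γ) • (Pi.single b 1 : Fin N → ℂ) + γ • μ'
          = x - γ • ((Pi.single a 1 : Fin N → ℂ) + Pi.single b 1) := by
      intro x; rw [hμ'def]; module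
    have kl : (fun x => F (x + (-γ) • μ') • L a b u x) = (fun x => f x • L a b u x) := by
      funext x
      show f (x + (-γ) • μ' + γ • μ') • L a b u x = f x • L a b u x
      rw [e1 x]
    have kr : (fun x => F (x + (-γ) • μ - (2*γ) • (Pi.single b 1 : Fin N → ℂ)) • u x)
        = (fun y => f (y - γ • ((Pi.single a 1 : Fin N → ℂ) + Pi.single b 1)) • u y) := by
      funext x
      show f (x + (-γ) • μ - (2*γ) • (Pi.single b 1 : Fin N → ℂ) + γ • μ') • u x = _
      rw [e2 x]
    rw [← kl, ← kr]
    convert key using 2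
  · have hz : ∀ x, L a b u x = 0 := by
      intro x
      rw [← hw x, hsupp μ' hμ'M, LinearMap.zero_apply]
    have hu2 : ∀ x, π μ
        ((fun y => f (y - γ • ((Pi.single a 1 : Fin N → ℂ) + Pi.single b 1)) • u y) x)
        = (fun y => f (y - γ • ((Pi.single a 1 : Fin N → ℂ) + Pi.single b 1)) • u y) x := by
      intro x
      show π μ (_ • u x) = _
      rw [_root_.map_smul, hu x]
    have hz2 : ∀ x, L a b
        (fun y => f (y - γ • ((Pi.single a 1 : Fin N → ℂ) + Pi.single b 1)) • u y) x = 0 := by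
      intro x
      rw [← hgr a b μ _ hu2 x, hsupp μ' hμ'M, LinearMap.zero_apply]
    funext x
    rw [hz x, smul_zero, hz2 x]

lemma lemA
    (hidem : ∀ μ, π μ ∘ₗ π μ = π μ)
    (horth : ∀ μ ν, μ ≠ ν → π μ ∘ₗ π ν = 0)
    (hcompl : (∑ μ ∈ M, π μ) = LinearMap.id)
    (hsupp : ∀ μ ∉ M, π μ = 0)
    (hgr : ∀ (a b : Fin N) (μ : Fin N → ℂ) (u : Vsp N W),
      (∀ x, π μ (u x) = u x) →
      ∀ x, π (μ - (Pi.single a 1 : Fin N → ℂ) + Pi.single b 1) (L a b u x) = L a b u x)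
    (hshift1 : ∀ (f : (Fin N → ℂ) → ℂ) (a b : Fin N) (u : Vsp N W),
      Phi N M π (-γ) f (L a b u) =
        L a b (Phi N M π (-γ) (fun y => f (y - (2*γ) • (Pi.single b 1 : Fin N → ℂ))) u))
    (f : (Fin N → ℂ) → ℂ) (a b : Fin N) (u : Vsp N W) :
    (fun x => f x • L a b u x)
      = L a b (fun y =>
          f (y - γ • ((Pi.single a 1 : Fin N → ℂ) + Pi.single b 1)) • u y) := by
  have hdec : u = ∑ μ ∈ M, (fun x => π μ (u x)) := by
    funext x
    rw [Finset.sum_apply]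
    have h1 : (∑ μ ∈ M, π μ) (u x) = u x := by rw [hcompl]; rfl
    rw [← LinearMap.sum_apply, h1]
  have step1 : (fun x => f x • L a b u x)
      = ∑ μ ∈ M, (fun x => f x • L a b (fun y => π μ (u y)) x) := by
    funext x
    rw [Finset.sum_apply]
    conv_lhs => rw [hdec]
    rw [map_sum, Finset.sum_apply, Finset.smul_sum]
  have step2 : ∀ μ ∈ M, (fun x => f x • L a b (fun y => π μ (u y)) x)
      = L a b (fun y =>
          f (y - γ • ((Pi.single a 1 : Fin N → ℂ) + Pi.single b 1)) • π μ (u y)) := by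
    intro μ hμ
    exact lemA_homog N γ M π L horth hsupp hgr hshift1 f a b (fun y => π μ (u y)) μ hμ
      (fun x => LinearMap.ext_iff.mp (hidem μ) (u x))
  rw [step1, Finset.sum_congr rfl step2, ← map_sum]
  congr 1
  funext y
  rw [Finset.sum_apply, ← Finset.smul_sum]
  congr 1
  have h1 : (∑ μ ∈ M, π μ) (u y) = u y := by rw [hcompl]; rfl
  rw [← LinearMap.sum_apply, h1]

end Core

end Lemma1Aux
namespace Lemma1Aux

section ChainShift

variable (N : ℕ) (γ : ℂ) {W : Type} [AddCommGroup W] [Module ℂ W]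
variable (M : Finset (Fin N → ℂ)) (π : (Fin N → ℂ) → Module.End ℂ W)
variable (L : Fin N → Fin N → (Vsp N W →ₗ[ℂ] Vsp N W))

def hlist {N p : ℕ} (l : List (Fin p)) (β : Fin p → Fin N) : Fin N → ℂ :=
  (l.map (fun a => (Pi.single (β a) 1 : Fin N → ℂ))).sum

lemma hlist_nil {N p : ℕ} (β : Fin p → Fin N) : hlist ([] : List (Fin p)) β = 0 := rfl

lemma hlist_cons {N p : ℕ} (a : Fin p) (l : List (Fin p)) (β : Fin p → Fin N) :
    hlist (a :: l) β = Pi.single (β a) 1 + hlist l β := by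
  rw [hlist, List.map_cons, List.sum_cons, hlist]

lemma hlist_update {N p : ℕ} (l : List (Fin p)) (β : Fin p → Fin N) (a : Fin p)
    (b : Fin N) (ha : a ∉ l) :
    hlist l (Function.update β a b) = hlist l β := by
  induction l with
  | nil => rfl
  | cons c l ih =>
    have hca : c ≠ a := fun hc => ha (hc ▸ (List.mem_cons_self (a := c) (l := l)))
    rw [hlist_cons, hlist_cons, ih (fun hc => ha (List.mem_cons_of_mem c hc)),
      Function.update_apply, if_neg hca]

lemma hlist_finRange {N m : ℕ} (β : Fin m → Fin N) :
    hlist (List.finRange m) β = Hm β := by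
  rw [Hm, Fin.sum_univ_def]; rfl

lemma lemE
    (hidem : ∀ μ, π μ ∘ₗ π μ = π μ)
    (horth : ∀ μ ν, μ ≠ ν → π μ ∘ₗ π ν = 0)
    (hcompl : (∑ μ ∈ M, π μ) = LinearMap.id)
    (hsupp : ∀ μ ∉ M, π μ = 0)
    (hgr : ∀ (a b : Fin N) (μ : Fin N → ℂ) (u : Vsp N W),
      (∀ x, π μ (u x) = u x) →
      ∀ x, π (μ - (Pi.single a 1 : Fin N → ℂ) + Pi.single b 1) (L a b u x) = L a b u x)
    (hshift1 : ∀ (f : (Fin N → ℂ) → ℂ) (a b : Fin N) (u : Vsp N W),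
      Phi N M π (-γ) f (L a b u) =
        L a b (Phi N M π (-γ) (fun y => f (y - (2*γ) • (Pi.single b 1 : Fin N → ℂ))) u))
    {p : ℕ} (l : List (Fin p)) (hnd : l.Nodup)
    (f : (Fin N → ℂ) → ℂ) (v : (Fin N → ℂ) → (Fin p → Fin N) → W)
    (x : Fin N → ℂ) (β : Fin p → Fin N) :
    f x • chainL N L l v x β
      = chainL N L l
          (fun z β' => f (z - γ • (hlist l β + hlist l β')) • v z β') x β := by
  induction l generalizing f x β with
  | nil =>
    show f x • v x β = f (x - γ • ((0 : Fin N → ℂ) + 0)) • v x β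
    norm_num
  | cons a l ih =>
    have hnc := List.nodup_cons.mp hnd
    have ha : a ∉ l := hnc.1
    have hnd' : l.Nodup := hnc.2
    rw [chainL_cons, chainL_cons, LopAux_apply, LopAux_apply, Finset.smul_sum]
    refine Finset.sum_congr rfl fun b _ => ?_
    have hA := congrFun (lemA N γ M π L hidem horth hcompl hsupp hgr hshift1 f (β a) b
      (fun y => chainL N L l v y (Function.update β a b))) x
    rw [hA]
    refine congrArg (fun g : Vsp N W => L (β a) b g x) (funext fun y => ?_)
    refine (ih hnd' (fun z => f (z - γ • ((Pi.single (β a) 1 : Fin N → ℂ) + Pi.single b 1)))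
      y (Function.update β a b)).trans ?_
    refine chainL_locality N L l _ _ y (Function.update β a b) fun z β' hβ' => ?_
    have hb : β' a = b := by rw [hβ' a ha, Function.update_self]
    show f (z - γ • (hlist l (Function.update β a b) + hlist l β')
        - γ • ((Pi.single (β a) 1 : Fin N → ℂ) + Pi.single b 1)) • v z β' = _
    have harg : z - γ • (hlist l (Function.update β a b) + hlist l β')
        - γ • ((Pi.single (β a) 1 : Fin N → ℂ) + Pi.single b 1)
        = z - γ • (hlist (a :: l) β + hlist (a :: l) β') := by
      rw [hlist_update l β a b ha, hlist_cons, hlist_cons, hb]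
      module
    rw [harg]

end ChainShift

end Lemma1Aux
namespace Lemma1Aux

section Weights

variable {N : ℕ}

def wpres {p : ℕ} (A : Matrix (Fin p → Fin N) (Fin p → Fin N) ℂ) : Prop :=
  ∀ σ σ', A σ σ' ≠ 0 → Hm σ = Hm σ'

lemma wpres_one {p : ℕ} : wpres (1 : Matrix (Fin p → Fin N) (Fin p → Fin N) ℂ) := by
  intro σ σ' h
  by_cases hs : σ = σ'
  · rw [hs]
  · exact absurd (Matrix.one_apply_ne hs) h

lemma wpres_mul {p : ℕ} {A B : Matrix (Fin p → Fin N) (Fin p → Fin N) ℂ}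
    (hA : wpres A) (hB : wpres B) : wpres (A * B) := by
  intro σ σ' h
  rw [Matrix.mul_apply] at h
  obtain ⟨ρ, _, hρ⟩ := Finset.exists_ne_zero_of_sum_ne_zero h
  exact (hA σ ρ (left_ne_zero_of_mul hρ)).trans (hB ρ σ' (right_ne_zero_of_mul hρ))

lemma wpres_listprod {p : ℕ} (l : List (Matrix (Fin p → Fin N) (Fin p → Fin N) ℂ))
    (h : ∀ A ∈ l, wpres A) : wpres l.prod := by
  induction l with
  | nil => exact wpres_one
  | cons A l ih =>
    rw [List.prod_cons]
    exact wpres_mul (h A ((List.mem_cons_self (a := A) (l := l)))) (ih fun B hB => h B (List.mem_cons_of_mem A hB))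

lemma wpres_Rhat (R : (Fin N → ℂ) → Matrix (Fin N × Fin N) (Fin N × Fin N) ℂ)
    (hzw : ZeroWeight N R) (p : ℕ) (a b : ℕ) (hab : a ≠ b)
    (f : (Fin p → Fin N) → Fin N → ℂ) : wpres (RhatPair N R p a b f) := by
  intro σ σ' hne
  by_cases hp : a < p ∧ b < p
  · rw [RhatPair, dif_pos hp, Matrix.of_apply] at hne
    by_cases hcond : ∀ i : Fin p, (i : ℕ) ≠ a → (i : ℕ) ≠ b → σ i = σ' i
    · rw [if_pos hcond] at hne
      have heq : (Pi.single (σ ⟨b, hp.2⟩) 1 : Fin N → ℂ) + Pi.single (σ ⟨a, hp.1⟩) 1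
          = (Pi.single (σ' ⟨a, hp.1⟩) 1 : Fin N → ℂ) + Pi.single (σ' ⟨b, hp.2⟩) 1 := by
        by_contra hc
        exact hne (hzw _ _ _ _ _ hc)
      set av : Fin p := ⟨a, hp.1⟩
      set bv : Fin p := ⟨b, hp.2⟩
      have habv : bv ≠ av := fun hc => hab (congrArg Fin.val hc).symm
      have hsplit : ∀ τ : Fin p → Fin N, Hm τ
          = Pi.single (τ av) 1 + (Pi.single (τ bv) 1
            + ∑ i ∈ (Finset.univ.erase av).erase bv, (Pi.single (τ i) 1 : Fin N → ℂ)) := by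
        intro τ
        rw [Hm, ← Finset.add_sum_erase _ _ (Finset.mem_univ av),
          ← Finset.add_sum_erase _ _ (Finset.mem_erase.mpr ⟨habv, Finset.mem_univ bv⟩)]
      rw [hsplit σ, hsplit σ']
      have hrest : ∑ i ∈ (Finset.univ.erase av).erase bv, (Pi.single (σ i) 1 : Fin N → ℂ)
          = ∑ i ∈ (Finset.univ.erase av).erase bv, (Pi.single (σ' i) 1 : Fin N → ℂ) := by
        refine Finset.sum_congr rfl fun i hi => ?_
        have hi1 := Finset.mem_erase.mp hi
        have hi2 := Finset.mem_erase.mp hi1.2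
        rw [hcond i (fun hc => hi2.1 (Fin.ext hc)) (fun hc => hi1.1 (Fin.ext hc))]
      rw [hrest]
      have hab2 : (Pi.single (σ av) 1 : Fin N → ℂ) + Pi.single (σ bv) 1
          = Pi.single (σ' av) 1 + Pi.single (σ' bv) 1 := by
        rw [add_comm] at heq
        exact heq
      rw [← add_assoc, ← add_assoc, hab2]
    · rw [if_neg hcond] at hne
      exact absurd rfl hne
  · rw [RhatPair, dif_neg hp] at hne
    exact wpres_one σ σ' hne

lemma wpres_calI (R : (Fin N → ℂ) → Matrix (Fin N × Fin N) (Fin N × Fin N) ℂ)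
    (hzw : ZeroWeight N R) (γ : ℂ) (p k l : ℕ) (hk : 1 ≤ k)
    (base : (Fin p → Fin N) → Fin N → ℂ) : wpres (calI N γ R p k l base) := by
  unfold calI
  refine wpres_listprod _ fun A hA => ?_
  rw [List.mem_map] at hA
  obtain ⟨j, hj, rfl⟩ := hA
  have hj1 : k ≤ j := (List.mem_range'_1.mp hj).1
  exact wpres_Rhat R hzw p (j-1) j (by omega) _

end Weights

end Lemma1Aux
namespace Lemma1Aux

section Blocks

variable {N : ℕ}

lemma glue_eq_iff {n m : ℕ} (ρ ρ' : Fin n → Fin N) (β β' : Fin m → Fin N) :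
    glue ρ β = glue ρ' β' ↔ ρ = ρ' ∧ β = β' := by
  constructor
  · intro h
    constructor
    · funext a
      have := congrFun h ⟨a.1, by omega⟩
      rwa [glue_inl, glue_inl] at this
    · funext j
      have := congrFun h ⟨n + j.1, by omega⟩
      rwa [glue_inr, glue_inr] at this
  · rintro ⟨rfl, rfl⟩; rfl

variable (R : (Fin N → ℂ) → Matrix (Fin N × Fin N) (Fin N × Fin N) ℂ)

lemma Rhat_glue_low {n m : ℕ} (a b : ℕ) (ha : a < n) (hb : b < n)
    (f : (Fin (n+m) → Fin N) → Fin N → ℂ) (ρ ρ' : Fin n → Fin N) (β β'' : Fin m → Fin N) :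
    RhatPair N R (n+m) a b f (glue ρ β) (glue ρ' β'')
      = if β'' = β then RhatPair N R n a b (fun ρ₀ => f (glue ρ₀ β)) ρ ρ' else 0 := by
  have hp : a < n + m ∧ b < n + m := ⟨by omega, by omega⟩
  have hn : a < n ∧ b < n := ⟨ha, hb⟩
  rw [RhatPair, dif_pos hp, Matrix.of_apply, RhatPair, dif_pos hn, Matrix.of_apply]
  by_cases hβ : β'' = β
  · subst hβ
    rw [if_pos rfl]
    by_cases hC : ∀ i : Fin n, (i : ℕ) ≠ a → (i : ℕ) ≠ b → ρ i = ρ' i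
    · have hCp : ∀ i : Fin (n+m), (i : ℕ) ≠ a → (i : ℕ) ≠ b → glue ρ β'' i = glue ρ' β'' i := by
        intro i hia hib
        by_cases hi : (i : ℕ) < n
        · rw [glue_lt _ _ _ hi, glue_lt _ _ _ hi]
          exact hC ⟨i, hi⟩ hia hib
        · rw [glue_ge _ _ _ hi, glue_ge _ _ _ hi]
      rw [if_pos hCp, if_pos hC]
      rw [glue_lt _ _ _ (show ((⟨b, hp.2⟩ : Fin (n+m)) : ℕ) < n from hb),
        glue_lt _ _ _ (show ((⟨a, hp.1⟩ : Fin (n+m)) : ℕ) < n from ha),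
        glue_lt _ _ _ (show ((⟨a, hp.1⟩ : Fin (n+m)) : ℕ) < n from ha),
        glue_lt _ _ _ (show ((⟨b, hp.2⟩ : Fin (n+m)) : ℕ) < n from hb)]
    · have hCp : ¬ ∀ i : Fin (n+m), (i : ℕ) ≠ a → (i : ℕ) ≠ b → glue ρ β'' i = glue ρ' β'' i := by
        intro hCC
        apply hC
        intro i hia hib
        have e1 : glue ρ β'' (⟨i.1, by omega⟩ : Fin (n+m)) = ρ i := glue_lt ρ β'' _ i.2
        have e2 : glue ρ' β'' (⟨i.1, by omega⟩ : Fin (n+m)) = ρ' i := glue_lt ρ' β'' _ i.2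
        exact (e1.symm.trans (hCC ⟨i.1, by omega⟩ hia hib)).trans e2
      rw [if_neg hCp, if_neg hC]
  · rw [if_neg hβ]
    obtain ⟨j, hj⟩ := Function.ne_iff.mp hβ
    have hCp : ¬ ∀ i : Fin (n+m), (i : ℕ) ≠ a → (i : ℕ) ≠ b → glue ρ β i = glue ρ' β'' i := by
      intro hCC
      have := hCC ⟨n + j.1, by omega⟩ (by show n + j.1 ≠ a; omega) (by show n + j.1 ≠ b; omega)
      rw [glue_inr, glue_inr] at this
      exact hj this.symm
    rw [if_neg hCp]

lemma Rhat_glue_high {n m : ℕ} (a b : ℕ) (ha : n ≤ a) (ha2 : a < n + m)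
    (hb : n ≤ b) (hb2 : b < n + m)
    (f : (Fin (n+m) → Fin N) → Fin N → ℂ) (ρ ρ' : Fin n → Fin N) (β β'' : Fin m → Fin N) :
    RhatPair N R (n+m) a b f (glue ρ β) (glue ρ' β'')
      = if ρ' = ρ then RhatPair N R m (a-n) (b-n) (fun β₀ => f (glue ρ β₀)) β β'' else 0 := by
  have hp : a < n + m ∧ b < n + m := ⟨ha2, hb2⟩
  have hm : a - n < m ∧ b - n < m := ⟨by omega, by omega⟩
  rw [RhatPair, dif_pos hp, Matrix.of_apply, RhatPair, dif_pos hm, Matrix.of_apply]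
  by_cases hρ : ρ' = ρ
  · subst hρ
    rw [if_pos rfl]
    by_cases hC : ∀ i : Fin m, (i : ℕ) ≠ a - n → (i : ℕ) ≠ b - n → β i = β'' i
    · have hCp : ∀ i : Fin (n+m), (i : ℕ) ≠ a → (i : ℕ) ≠ b → glue ρ' β i = glue ρ' β'' i := by
        intro i hia hib
        by_cases hi : (i : ℕ) < n
        · rw [glue_lt _ _ _ hi, glue_lt _ _ _ hi]
        · rw [glue_ge _ _ _ hi, glue_ge _ _ _ hi]
          exact hC ⟨(i : ℕ) - n, by have := i.2; omega⟩
            (by show (i : ℕ) - n ≠ a - n; omega) (by show (i : ℕ) - n ≠ b - n; omega)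
      rw [if_pos hCp, if_pos hC]
      rw [glue_ge _ _ _ (show ¬ ((⟨b, hp.2⟩ : Fin (n+m)) : ℕ) < n by simp; omega),
        glue_ge _ _ _ (show ¬ ((⟨a, hp.1⟩ : Fin (n+m)) : ℕ) < n by simp; omega),
        glue_ge _ _ _ (show ¬ ((⟨a, hp.1⟩ : Fin (n+m)) : ℕ) < n by simp; omega),
        glue_ge _ _ _ (show ¬ ((⟨b, hp.2⟩ : Fin (n+m)) : ℕ) < n by simp; omega)]
    · have hCp : ¬ ∀ i : Fin (n+m), (i : ℕ) ≠ a → (i : ℕ) ≠ b → glue ρ' β i = glue ρ' β'' i := by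
        intro hCC
        apply hC
        intro i hia hib
        have := hCC ⟨n + i.1, by omega⟩ (by show n + i.1 ≠ a; omega) (by show n + i.1 ≠ b; omega)
        rwa [glue_inr, glue_inr] at this
      rw [if_neg hCp, if_neg hC]
  · rw [if_neg hρ]
    have hCp : ¬ ∀ i : Fin (n+m), (i : ℕ) ≠ a → (i : ℕ) ≠ b → glue ρ β i = glue ρ' β'' i := by
      intro hCC
      obtain ⟨j, hj⟩ := Function.ne_iff.mp (Ne.symm hρ)
      have hjn := j.2
      have e1 : glue ρ β (⟨j.1, by omega⟩ : Fin (n+m)) = ρ j := glue_lt ρ β _ j.2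
      have e2 : glue ρ' β'' (⟨j.1, by omega⟩ : Fin (n+m)) = ρ' j := glue_lt ρ' β'' _ j.2
      exact hj ((e1.symm.trans (hCC ⟨j.1, by omega⟩ (by show (j : ℕ) ≠ a; omega)
        (by show (j : ℕ) ≠ b; omega))).trans e2)
    rw [if_neg hCp]

end Blocks

end Lemma1Aux
namespace Lemma1Aux

section Prods

variable {N : ℕ} (R : (Fin N → ℂ) → Matrix (Fin N × Fin N) (Fin N × Fin N) ℂ)

lemma sum_glue {n m : ℕ} {α : Type*} [AddCommMonoid α] (g : (Fin (n+m) → Fin N) → α) :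
    ∑ σh, g σh = ∑ ρ'' : Fin n → Fin N, ∑ β'' : Fin m → Fin N, g (glue ρ'' β'') := by
  rw [← Equiv.sum_comp (glueEquiv N n m) g, Fintype.sum_prod_type]
  rfl

lemma prod_glue_low {n m : ℕ} (l : List ℕ) (hl : ∀ j ∈ l, 1 ≤ j ∧ j < n)
    (F : ℕ → (Fin (n+m) → Fin N) → Fin N → ℂ)
    (Fn : ℕ → (Fin n → Fin N) → Fin N → ℂ) (β : Fin m → Fin N)
    (hF : ∀ j ∈ l, ∀ ρ₀ : Fin n → Fin N, F j (glue ρ₀ β) = Fn j ρ₀) :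
    ∀ (ρ ρ' : Fin n → Fin N) (β' : Fin m → Fin N),
    (l.map (fun j => RhatPair N R (n+m) (j-1) j (F j))).prod (glue ρ β) (glue ρ' β')
      = if β' = β
        then (l.map (fun j => RhatPair N R n (j-1) j (Fn j))).prod ρ ρ' else 0 := by
  induction l with
  | nil =>
    intro ρ ρ' β'
    simp only [List.map_nil, List.prod_nil]
    by_cases hβ : β' = β
    · subst hβ
      rw [if_pos rfl, Matrix.one_apply, Matrix.one_apply]
      by_cases hρ : ρ = ρ'
      · rw [if_pos (by rw [hρ]), if_pos hρ]
      · rw [if_neg (fun hc => hρ ((glue_eq_iff _ _ _ _).mp hc).1), if_neg hρ]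
    · rw [if_neg hβ, Matrix.one_apply_ne (fun hc => hβ ((glue_eq_iff _ _ _ _).mp hc).2.symm)]
  | cons j l ih =>
    intro ρ ρ' β'
    have hj := hl j ((List.mem_cons_self (a := j) (l := l)))
    have ihl := ih (fun j hjl => hl j (List.mem_cons_of_mem _ hjl))
      (fun j hjl => hF j (List.mem_cons_of_mem _ hjl))
    rw [List.map_cons, List.prod_cons, List.map_cons, List.prod_cons, Matrix.mul_apply,
      Matrix.mul_apply]
    rw [sum_glue]
    have hFj : (fun ρ₀ => F j (glue ρ₀ β)) = Fn j :=
      funext (hF j ((List.mem_cons_self (a := j) (l := l))))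
    have inner : ∀ ρ'' : Fin n → Fin N,
        (∑ β'' : Fin m → Fin N,
          RhatPair N R (n+m) (j-1) j (F j) (glue ρ β) (glue ρ'' β'')
            * (l.map (fun j => RhatPair N R (n+m) (j-1) j (F j))).prod
                (glue ρ'' β'') (glue ρ' β'))
        = RhatPair N R n (j-1) j (Fn j) ρ ρ''
            * (if β' = β
              then (l.map (fun j => RhatPair N R n (j-1) j (Fn j))).prod ρ'' ρ' else 0) := by
      intro ρ''
      have h1 : ∀ β'' : Fin m → Fin N,
          RhatPair N R (n+m) (j-1) j (F j) (glue ρ β) (glue ρ'' β'')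
            * (l.map (fun j => RhatPair N R (n+m) (j-1) j (F j))).prod
                (glue ρ'' β'') (glue ρ' β')
          = if β'' = β then RhatPair N R n (j-1) j (Fn j) ρ ρ''
              * (l.map (fun j => RhatPair N R (n+m) (j-1) j (F j))).prod
                  (glue ρ'' β'') (glue ρ' β') else 0 := by
        intro β''
        rw [Rhat_glue_low R (j-1) j (by omega) hj.2 (F j) ρ ρ'' β β'', hFj, ite_mul, zero_mul]
      rw [Finset.sum_congr rfl fun β'' _ => h1 β'', Finset.sum_ite_eq' Finset.univ β,
        if_pos (Finset.mem_univ β), ihl ρ'' ρ' β']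
    rw [Finset.sum_congr rfl fun ρ'' _ => inner ρ'']
    by_cases hβ' : β' = β
    · simp only [if_pos hβ']
    · simp only [if_neg hβ', mul_zero, Finset.sum_const_zero]

lemma prod_glue_high {n m : ℕ} (l : List ℕ) (hl : ∀ j ∈ l, n+1 ≤ j ∧ j < n+m)
    (F : ℕ → (Fin (n+m) → Fin N) → Fin N → ℂ)
    (Fm : ℕ → (Fin m → Fin N) → Fin N → ℂ)
    (hF : ∀ j ∈ l, ∀ (ρ₀ : Fin n → Fin N) (β₀ : Fin m → Fin N),
      F j (glue ρ₀ β₀) = Fm j β₀) :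
    ∀ (ρ ρ' : Fin n → Fin N) (β β' : Fin m → Fin N),
    (l.map (fun j => RhatPair N R (n+m) (j-1) j (F j))).prod (glue ρ β) (glue ρ' β')
      = if ρ' = ρ
        then (l.map (fun j => RhatPair N R m (j-1-n) (j-n) (Fm j))).prod β β' else 0 := by
  induction l with
  | nil =>
    intro ρ ρ' β β'
    simp only [List.map_nil, List.prod_nil]
    by_cases hρ : ρ' = ρ
    · subst hρ
      rw [if_pos rfl, Matrix.one_apply, Matrix.one_apply]
      by_cases hβ : β = β'
      · rw [if_pos (by rw [hβ]), if_pos hβ]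
      · rw [if_neg (fun hc => hβ ((glue_eq_iff _ _ _ _).mp hc).2), if_neg hβ]
    · rw [if_neg hρ, Matrix.one_apply_ne (fun hc => hρ ((glue_eq_iff _ _ _ _).mp hc).1.symm)]
  | cons j l ih =>
    intro ρ ρ' β β'
    have hj := hl j ((List.mem_cons_self (a := j) (l := l)))
    have ihl := ih (fun j hjl => hl j (List.mem_cons_of_mem _ hjl))
      (fun j hjl => hF j (List.mem_cons_of_mem _ hjl))
    rw [List.map_cons, List.prod_cons, List.map_cons, List.prod_cons, Matrix.mul_apply,
      Matrix.mul_apply]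
    rw [sum_glue]
    have hFj : ∀ ρ₀ : Fin n → Fin N, (fun β₀ => F j (glue ρ₀ β₀)) = Fm j :=
      fun ρ₀ => funext (hF j ((List.mem_cons_self (a := j) (l := l))) ρ₀)
    have h1 : ∀ (ρ'' : Fin n → Fin N) (β'' : Fin m → Fin N),
        RhatPair N R (n+m) (j-1) j (F j) (glue ρ β) (glue ρ'' β'')
          * (l.map (fun j => RhatPair N R (n+m) (j-1) j (F j))).prod
              (glue ρ'' β'') (glue ρ' β')
        = if ρ'' = ρ then RhatPair N R m (j-1-n) (j-n) (Fm j) β β''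
            * (if ρ' = ρ'' then (l.map (fun j => RhatPair N R m (j-1-n) (j-n) (Fm j))).prod
                β'' β' else 0) else 0 := by
      intro ρ'' β''
      rw [Rhat_glue_high R (j-1) j (by omega) (by omega) (by omega) hj.2 (F j) ρ ρ'' β β'',
        hFj ρ, ihl ρ'' ρ' β'' β', ite_mul, zero_mul]
    rw [Finset.sum_congr rfl fun ρ'' _ => Finset.sum_congr rfl fun β'' _ => h1 ρ'' β'']
    have houter : ∀ ρ'' : Fin n → Fin N,
        (∑ β'' : Fin m → Fin N, if ρ'' = ρ then RhatPair N R m (j-1-n) (j-n) (Fm j) β β''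
            * (if ρ' = ρ'' then (l.map (fun j => RhatPair N R m (j-1-n) (j-n) (Fm j))).prod
                β'' β' else 0) else 0)
        = if ρ'' = ρ then (∑ β'' : Fin m → Fin N,
            RhatPair N R m (j-1-n) (j-n) (Fm j) β β''
              * (if ρ' = ρ'' then (l.map (fun j => RhatPair N R m (j-1-n) (j-n) (Fm j))).prod
                  β'' β' else 0)) else 0 := by
      intro ρ''
      by_cases hc : ρ'' = ρ
      · simp only [if_pos hc]
      · simp only [if_neg hc, Finset.sum_const_zero]
    rw [Finset.sum_congr rfl fun ρ'' _ => houter ρ'', Finset.sum_ite_eq' Finset.univ ρ,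
      if_pos (Finset.mem_univ ρ)]
    by_cases hρ' : ρ' = ρ
    · simp only [if_pos hρ']
    · simp only [if_neg hρ', mul_zero, Finset.sum_const_zero]

end Prods

end Lemma1Aux
namespace Lemma1Aux

section CalI

variable {N : ℕ} (R : (Fin N → ℂ) → Matrix (Fin N × Fin N) (Fin N × Fin N) ℂ)

lemma calI_glue_low (n m : ℕ) (γ : ℂ) (y : Fin N → ℂ) (ρ ρ' : Fin n → Fin N)
    (β β'' : Fin m → Fin N) :
    calI N γ R (n+m) 1 n (fun σ' => y - (2*γ) • hsum N (n+m) n (n+m) σ')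
        (glue ρ β) (glue ρ' β'')
      = if β'' = β then calI N γ R n 1 n (fun _ => y - (2*γ) • Hm β) ρ ρ' else 0 := by
  have hl : ∀ j ∈ List.range' 1 (n-1), 1 ≤ j ∧ j < n := by
    intro j hj
    have := List.mem_range'_1.mp hj
    omega
  have hF : ∀ j ∈ List.range' 1 (n-1), ∀ ρ₀ : Fin n → Fin N,
      (fun σ => (y - (2*γ) • hsum N (n+m) n (n+m) σ) - (2*γ) • hsum N (n+m) (j+1) n σ)
          (glue ρ₀ β)
        = (fun j ρ₀ => (y - (2*γ) • Hm β) - (2*γ) • hsum N n (j+1) n ρ₀) j ρ₀ := by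
    intro j hj ρ₀
    show (y - (2*γ) • hsum N (n+m) n (n+m) (glue ρ₀ β))
        - (2*γ) • hsum N (n+m) (j+1) n (glue ρ₀ β) = _
    rw [hsum_glue_tail, hsum_glue_left ρ₀ β (j+1) n le_rfl]
  exact prod_glue_low R (List.range' 1 (n-1)) hl
    (fun j σ => (y - (2*γ) • hsum N (n+m) n (n+m) σ) - (2*γ) • hsum N (n+m) (j+1) n σ)
    (fun j ρ₀ => (y - (2*γ) • Hm β) - (2*γ) • hsum N n (j+1) n ρ₀) β hF ρ ρ' β''

lemma calI_glue_high (n m : ℕ) (γ : ℂ) (y : Fin N → ℂ) (ρ ρ' : Fin n → Fin N)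
    (β β' : Fin m → Fin N) :
    calI N γ R (n+m) (n+1) (n+m) (fun _ => y) (glue ρ β) (glue ρ' β')
      = if ρ' = ρ then calI N γ R m 1 m (fun _ => y) β β' else 0 := by
  have hl : ∀ j ∈ List.range' (n+1) ((n+m)-(n+1)), n+1 ≤ j ∧ j < n+m := by
    intro j hj
    have := List.mem_range'_1.mp hj
    omega
  have hF : ∀ j ∈ List.range' (n+1) ((n+m)-(n+1)), ∀ (ρ₀ : Fin n → Fin N) (β₀ : Fin m → Fin N),
      (fun σ => (fun _ : Fin (n+m) → Fin N => y) σ - (2*γ) • hsum N (n+m) (j+1) (n+m) σ)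
          (glue ρ₀ β₀)
        = (fun j β₀ => y - (2*γ) • hsum N m (j+1-n) (n+m-n) β₀) j β₀ := by
    intro j hj ρ₀ β₀
    have hj' := List.mem_range'_1.mp hj
    show y - (2*γ) • hsum N (n+m) (j+1) (n+m) (glue ρ₀ β₀) = _
    rw [hsum_glue_right ρ₀ β₀ (j+1) (n+m) (by omega)]
  have h := prod_glue_high R (List.range' (n+1) ((n+m)-(n+1))) hl
    (fun j σ => (fun _ : Fin (n+m) → Fin N => y) σ - (2*γ) • hsum N (n+m) (j+1) (n+m) σ)
    (fun j β₀ => y - (2*γ) • hsum N m (j+1-n) (n+m-n) β₀) hF ρ ρ' β β'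
  unfold calI
  rw [h]
  by_cases hρ : ρ' = ρ
  · rw [if_pos hρ, if_pos hρ]
    have hll : (List.range' (n+1) ((n+m)-(n+1))).map
          (fun j => RhatPair N R m (j-1-n) (j-n)
            (fun β₀ => y - (2*γ) • hsum N m (j+1-n) (n+m-n) β₀))
        = (List.range' 1 (m-1)).map
          (fun j => RhatPair N R m (j-1) j
            (fun σ => (fun _ : Fin m → Fin N => y) σ - (2*γ) • hsum N m (j+1) m σ)) := by
      rw [List.range'_eq_map_range, List.range'_eq_map_range, List.map_map, List.map_map,
        show n+m-(n+1) = m-1 from by omega]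
      refine List.map_congr_left fun t ht => ?_
      show RhatPair N R m (n+1+t-1-n) (n+1+t-n)
          (fun β₀ => y - (2*γ) • hsum N m (n+1+t+1-n) (n+m-n) β₀)
        = RhatPair N R m (1+t-1) (1+t)
          (fun σ => (fun _ : Fin m → Fin N => y) σ - (2*γ) • hsum N m (1+t+1) m σ)
      simp only [show n+1+t-1-n = 1+t-1 from by omega, show n+1+t-n = 1+t from by omega,
        show n+1+t+1-n = 1+t+1 from by omega, show n+m-n = m from by omega]
    rw [hll]
  · rw [if_neg hρ, if_neg hρ]

lemma B_entry (n m : ℕ) (γ : ℂ) (z : Fin N → ℂ) (ρ' τ : Fin n → Fin N)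
    (β' σm : Fin m → Fin N) :
    (calI N γ R (n+m) 1 n (fun σ' => z - (2*γ) • hsum N (n+m) n (n+m) σ')
        * calI N γ R (n+m) (n+1) (n+m) (fun _ => z)) (glue ρ' β') (glue τ σm)
      = calI N γ R n 1 n (fun _ => z - (2*γ) • Hm β') ρ' τ
          * calI N γ R m 1 m (fun _ => z) β' σm := by
  rw [Matrix.mul_apply, sum_glue]
  have h1 : ∀ (ρ'' : Fin n → Fin N) (β'' : Fin m → Fin N),
      calI N γ R (n+m) 1 n (fun σ' => z - (2*γ) • hsum N (n+m) n (n+m) σ')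
          (glue ρ' β') (glue ρ'' β'')
        * calI N γ R (n+m) (n+1) (n+m) (fun _ => z) (glue ρ'' β'') (glue τ σm)
      = if β'' = β' then
          calI N γ R n 1 n (fun _ => z - (2*γ) • Hm β') ρ' ρ''
            * (if τ = ρ'' then calI N γ R m 1 m (fun _ => z) β'' σm else 0) else 0 := by
    intro ρ'' β''
    rw [calI_glue_low R n m γ z ρ' ρ'' β' β'', calI_glue_high R n m γ z ρ'' τ β'' σm,
      ite_mul, zero_mul]
  rw [Finset.sum_congr rfl fun ρ'' _ => Finset.sum_congr rfl fun β'' _ => h1 ρ'' β'']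
  have h2 : ∀ ρ'' : Fin n → Fin N,
      (∑ β'' : Fin m → Fin N, if β'' = β' then
          calI N γ R n 1 n (fun _ => z - (2*γ) • Hm β') ρ' ρ''
            * (if τ = ρ'' then calI N γ R m 1 m (fun _ => z) β'' σm else 0) else 0)
      = if τ = ρ'' then
          calI N γ R n 1 n (fun _ => z - (2*γ) • Hm β') ρ' ρ''
            * calI N γ R m 1 m (fun _ => z) β' σm else 0 := by
    intro ρ''
    rw [Finset.sum_ite_eq' Finset.univ β', if_pos (Finset.mem_univ β'), mul_ite, mul_zero]
  rw [Finset.sum_congr rfl fun ρ'' _ => h2 ρ'', Finset.sum_ite_eq Finset.univ τ,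
    if_pos (Finset.mem_univ τ)]

end CalI

end Lemma1Aux

open Lemma1Aux

theorem lemma1_In_Im_as_combined_trace (hN : 2 ≤ N)
    (R : (Fin N → ℂ) → Matrix (Fin N × Fin N) (Fin N × Fin N) ℂ)
    (hzw : ZeroWeight N R) (htr : TransInv N R) (hybe : DYBE N γ R)
    -- the graded quantum space W = ⊕_{μ∈M} W_μ, with 0 ∈ M
    (M : Finset (Fin N → ℂ)) (h0M : (0 : Fin N → ℂ) ∈ M)
    (π : (Fin N → ℂ) → Module.End ℂ W)
    (hidem : ∀ μ, π μ ∘ₗ π μ = π μ)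
    (horth : ∀ μ ν, μ ≠ ν → π μ ∘ₗ π ν = 0)
    (hcompl : (∑ μ ∈ M, π μ) = LinearMap.id)
    (hsupp : ∀ μ ∉ M, π μ = 0)
    (L : Fin N → Fin N → (Vsp N W →ₗ[ℂ] Vsp N W))
    -- (iv) grading condition on L
    (hgr : ∀ (a b : Fin N) (μ : Fin N → ℂ) (u : Vsp N W),
      (∀ x, π μ (u x) = u x) →
      ∀ x, π (μ - (Pi.single a 1 : Fin N → ℂ) + Pi.single b 1) (L a b u x) = L a b u x)
    -- (v) shift properties of L
    (hshift1 : ∀ (f : (Fin N → ℂ) → ℂ) (a b : Fin N) (u : Vsp N W),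
      Phi N M π (-γ) f (L a b u) =
        L a b (Phi N M π (-γ) (fun y => f (y - (2*γ) • (Pi.single b 1 : Fin N → ℂ))) u))
    (hshift2 : ∀ (f : (Fin N → ℂ) → ℂ) (a b : Fin N) (u : Vsp N W),
      Phi N M π γ (fun y => f (y + (2*γ) • (Pi.single a 1 : Fin N → ℂ))) (L a b u) =
        L a b (Phi N M π γ f u))
    -- (vi) the quantum Lax relation R₁₂(x+γh^{(q)}) L₁ L₂ = L₂ L₁ R₁₂(x−γh^{(q)})
    (hRLL : ∀ u : (Fin N → ℂ) → Fin N × Fin N → W,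
      Rop N R M π γ (Lax1 N L (Lax2 N L u)) =
        Lax2 N L (Lax1 N L (Rop N R M π (-γ) u))) :
    ∀ n m : ℕ, 1 ≤ n → 1 ≤ m → ∀ u : Vsp N W, inV0 N π u →
      In N γ R L n (In N γ R L m u) = Inm N γ R L n m u := by
  intro n m hn hm u _
  funext x
  have mulMat_emb : ∀ (p : ℕ) (A : (Fin N → ℂ) → Matrix (Fin p → Fin N) (Fin p → Fin N) ℂ)
      (σ : Fin p → Fin N) (v : Vsp N W),
      mulMat N p A (emb N p σ v) = fun z β => A z β σ • v z := by
    intro p A σ v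
    funext z β
    unfold mulMat emb
    rw [Finset.sum_eq_single σ]
    · rw [if_pos rfl]
    · intro σ'' _ hne
      rw [if_neg hne, smul_zero]
    · intro habs
      exact absurd (Finset.mem_univ σ) habs
  -- the common normal form
  set T : W := ∑ τ : Fin n → Fin N, ∑ σm : Fin m → Fin N,
      LopChain N L n (fun y ρ => LopChain N L m
        (fun z β' => (calI N γ R n 1 n (fun _ => z - (2*γ) • Hm β') ρ τ
          * calI N γ R m 1 m (fun _ => z) β' σm) • u z) y σm) x τ with hT
  have hRHS : Inm N γ R L n m u x = T := by
    calc Inm N γ R L n m u x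
        = ∑ σh : Fin (n+m) → Fin N, LopChain N L (n+m)
            (fun z β => ((calI N γ R (n+m) 1 n
                (fun σ' => z - (2*γ) • hsum N (n+m) n (n+m) σ')
              * calI N γ R (n+m) (n+1) (n+m) (fun _ => z)) β σh) • u z) x σh := by
          refine Finset.sum_congr rfl fun σh _ => ?_
          rw [mulMat_emb]
      _ = ∑ τ : Fin n → Fin N, ∑ σm : Fin m → Fin N, LopChain N L (n+m)
            (fun z β => ((calI N γ R (n+m) 1 n
                (fun σ' => z - (2*γ) • hsum N (n+m) n (n+m) σ')
              * calI N γ R (n+m) (n+1) (n+m) (fun _ => z)) β (glue τ σm)) • u z)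
            x (glue τ σm) :=
          sum_glue _
      _ = ∑ τ : Fin n → Fin N, ∑ σm : Fin m → Fin N,
            LopChain N L n (fun y ρ => LopChain N L m
              (fun z β' => ((calI N γ R (n+m) 1 n
                  (fun σ' => z - (2*γ) • hsum N (n+m) n (n+m) σ')
                * calI N γ R (n+m) (n+1) (n+m) (fun _ => z)) (glue ρ β') (glue τ σm)) • u z)
              y σm) x τ :=
          Finset.sum_congr rfl fun τ _ => Finset.sum_congr rfl fun σm _ =>
            chain_split N L _ x τ σm
      _ = T :=
          Finset.sum_congr rfl fun τ _ => Finset.sum_congr rfl fun σm _ =>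
            congrArg (fun G => LopChain N L n G x τ)
              (funext fun y => funext fun ρ =>
                congrArg (fun G' => LopChain N L m G' y σm)
                  (funext fun z => funext fun β' =>
                    congrArg (fun c : ℂ => c • u z) (B_entry R n m γ z ρ τ β' σm)))
  have hLHS : In N γ R L n (In N γ R L m u) x = T := by
    have hInm : ∀ y : Fin N → ℂ, In N γ R L m u y
        = ∑ σm : Fin m → Fin N, LopChain N L m
            (fun z β' => calI N γ R m 1 m (fun _ => z) β' σm • u z) y σm := by
      intro y
      show (∑ σm : Fin m → Fin N, LopChain N L m
        (mulMat N m (fun y' => calI N γ R m 1 m (fun _ => y')) (emb N m σm u)) y σm) = _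
      refine Finset.sum_congr rfl fun σm _ => ?_
      rw [mulMat_emb]
    calc In N γ R L n (In N γ R L m u) x
        = ∑ τ : Fin n → Fin N, LopChain N L n
            (fun y ρ => calI N γ R n 1 n (fun _ => y) ρ τ • In N γ R L m u y) x τ := by
          show (∑ τ : Fin n → Fin N, LopChain N L n
            (mulMat N n (fun y => calI N γ R n 1 n (fun _ => y))
              (emb N n τ (In N γ R L m u))) x τ) = _
          refine Finset.sum_congr rfl fun τ _ => ?_
          rw [mulMat_emb]
      _ = ∑ τ : Fin n → Fin N, LopChain N L n
            (fun y ρ => ∑ σm : Fin m → Fin N, calI N γ R n 1 n (fun _ => y) ρ τ •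
              LopChain N L m (fun z β' => calI N γ R m 1 m (fun _ => z) β' σm • u z) y σm)
            x τ :=
          Finset.sum_congr rfl fun τ _ =>
            congrArg (fun G => LopChain N L n G x τ)
              (funext fun y => funext fun ρ => by rw [hInm y, Finset.smul_sum])
      _ = ∑ τ : Fin n → Fin N, ∑ σm : Fin m → Fin N, LopChain N L n
            (fun y ρ => calI N γ R n 1 n (fun _ => y) ρ τ •
              LopChain N L m (fun z β' => calI N γ R m 1 m (fun _ => z) β' σm • u z) y σm)
            x τ :=
          Finset.sum_congr rfl fun τ _ =>
            chainL_sum N L (List.finRange n) Finset.univ _ x τ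
      _ = ∑ τ : Fin n → Fin N, ∑ σm : Fin m → Fin N, LopChain N L n
            (fun y ρ => LopChain N L m
              (fun z β' => calI N γ R n 1 n
                  (fun _ => z - γ • (hlist (List.finRange m) σm + hlist (List.finRange m) β'))
                  ρ τ •
                (calI N γ R m 1 m (fun _ => z) β' σm • u z)) y σm) x τ :=
          Finset.sum_congr rfl fun τ _ => Finset.sum_congr rfl fun σm _ =>
            congrArg (fun G => LopChain N L n G x τ)
              (funext fun y => funext fun ρ =>
                lemE N γ M π L hidem horth hcompl hsupp hgr hshift1
                  (List.finRange m) (List.nodup_finRange m)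
                  (fun z => calI N γ R n 1 n (fun _ => z) ρ τ)
                  (fun z β' => calI N γ R m 1 m (fun _ => z) β' σm • u z) y σm)
      _ = T :=
          Finset.sum_congr rfl fun τ _ => Finset.sum_congr rfl fun σm _ =>
            congrArg (fun G => LopChain N L n G x τ)
              (funext fun y => funext fun ρ =>
                congrArg (fun G' => LopChain N L m G' y σm)
                  (funext fun z => funext fun β' => by
                    rw [hlist_finRange, hlist_finRange, smul_smul]
                    by_cases hAm : calI N γ R m 1 m (fun _ => z) β' σm = 0
                    · rw [hAm, mul_zero, mul_zero]
                    · have hw : Hm β' = Hm σm :=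
                        wpres_calI R hzw γ m 1 m le_rfl (fun _ => z) β' σm hAm
                      rw [show z - γ • (Hm σm + Hm β') = z - (2*γ) • Hm β' from by
                        rw [← hw]; module]))
  rw [hLHS, hRHS]
end
end
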